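/- arXiv:2411.15365 — 4 statements merged into one kernel-verified Lean document; each statement's English description precedes it below -/
import Mathlib

section
/- Let q, k ∈ ℕ and let G be a finite graph such that V(G) is (q,k)-unbreakable in G. Let X ⊆ V(G) with |X| ≤ k, and let u, v ∈ V(G) ∖ X be distinct. Then u and v lie in different connected components of G − X (the subgraph of G induced on V(G) ∖ X) if and only if there exists a set A ⊆ V(G) with |A| ≤ q that contains exactly one of u and v and such that every vertex outside A that is adjacent in G to a vertex of A belongs to X. -/
/-- A separation of a graph `G`: a pair of vertex sets covering all vertices with no
edge between `A \ B` and `B \ A`. -/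
def IsSeparation {V : Type*} (G : SimpleGraph V) (A B : Set V) : Prop :=
  A ∪ B = Set.univ ∧ ∀ a ∈ A \ B, ∀ b ∈ B \ A, ¬ G.Adj a b

/-- A vertex set `X` is `(q,k)`-unbreakable in `G` if every separation of order at most `k`
has a side containing at most `q` vertices of `X`. -/
def Unbreakable {V : Type*} (G : SimpleGraph V) (X : Set V) (q k : ℕ) : Prop :=
  ∀ A B : Set V, IsSeparation G A B → (A ∩ B).ncard ≤ k →
    (A ∩ X).ncard ≤ q ∨ (B ∩ X).ncard ≤ q

/-- The graph `G − X`: delete the vertices of `X` (keeping the ambient vertex type,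
with all vertices of `X` isolated, which has the same components outside `X`). -/
def deleteSet {V : Type*} (G : SimpleGraph V) (X : Set V) : SimpleGraph V where
  Adj a b := G.Adj a b ∧ a ∉ X ∧ b ∉ X
  symm := by
    constructor
    intro a b h
    exact ⟨h.1.symm, h.2.2, h.2.1⟩
  loopless := by
    constructor
    intro a h
    exact G.ne_of_adj h.1 rfl

lemma walk_notX {V : Type*} {G : SimpleGraph V} {X : Set V} :
    ∀ {a x : V}, a ∉ X → (deleteSet G X).Walk a x → x ∉ X := by
  intro a x ha p
  induction p with
  | nil => exact ha
  | cons h _ ih => exact ih h.2.2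

lemma reach_notX {V : Type*} {G : SimpleGraph V} {X : Set V} {a x : V}
    (ha : a ∉ X) (h : (deleteSet G X).Reachable a x) : x ∉ X := by
  obtain ⟨p⟩ := h
  exact walk_notX ha p

lemma comp_boundary {V : Type*} {G : SimpleGraph V} {X : Set V} {r : V} (hr : r ∉ X) :
    ∀ w ∉ {x | (deleteSet G X).Reachable r x},
      (∃ a ∈ {x | (deleteSet G X).Reachable r x}, G.Adj w a) → w ∈ X := by
  rintro w hw ⟨a, ha, hadj⟩
  by_contra hwX
  have haX : a ∉ X := reach_notX hr ha
  exact hw (ha.trans (SimpleGraph.Adj.reachable (⟨hadj.symm, haX, hwX⟩ :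
    (deleteSet G X).Adj a w)))

lemma walk_stays {V : Type*} {G : SimpleGraph V} {X A : Set V}
    (hA : ∀ w ∉ A, (∃ a ∈ A, G.Adj w a) → w ∈ X) :
    ∀ {a x : V}, (deleteSet G X).Walk a x → a ∈ A → x ∈ A := by
  intro a x p
  induction p with
  | nil => exact id
  | cons h _ ih =>
    intro ha
    apply ih
    by_contra hy
    exact h.2.2 (hA _ hy ⟨_, ha, h.1.symm⟩)

theorem stmt0 {V : Type*} [Fintype V] (G : SimpleGraph V) (q k : ℕ)
    (hunb : Unbreakable G Set.univ q k)
    (X : Set V) (hX : X.ncard ≤ k) (u v : V) (hu : u ∉ X) (hv : v ∉ X) (huv : u ≠ v) :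
    ¬ (deleteSet G X).Reachable u v ↔
      ∃ A : Set V, A.ncard ≤ q ∧ ((u ∈ A ∧ v ∉ A) ∨ (u ∉ A ∧ v ∈ A)) ∧
        ∀ w ∉ A, (∃ a ∈ A, G.Adj w a) → w ∈ X := by
  constructor
  · intro hnr
    set C : Set V := {x | (deleteSet G X).Reachable u x} with hCdef
    have hsep : IsSeparation G (C ∪ X) (Cᶜ ∪ X) := by
      constructor
      · ext x
        simp only [Set.mem_union, Set.mem_compl_iff, Set.mem_univ, iff_true]
        tauto
      · rintro a ⟨haA, haB⟩ b ⟨hbB, hbA⟩ hadj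
        simp only [Set.mem_union, Set.mem_compl_iff, not_or, not_not] at haA haB hbB hbA
        exact hbA.1 (haB.1.trans (SimpleGraph.Adj.reachable
          (⟨hadj, haB.2, hbA.2⟩ : (deleteSet G X).Adj a b)))
    have hord : ((C ∪ X) ∩ (Cᶜ ∪ X)).ncard ≤ k := by
      have : (C ∪ X) ∩ (Cᶜ ∪ X) = X := by
        ext x
        simp only [Set.mem_inter_iff, Set.mem_union, Set.mem_compl_iff]
        tauto
      rw [this]; exact hX
    rcases hunb _ _ hsep hord with h | h
    · refine ⟨C, ?_, Or.inl ⟨SimpleGraph.Reachable.refl u, hnr⟩, comp_boundary hu⟩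
      rw [Set.inter_univ] at h
      exact le_trans (Set.ncard_le_ncard (Set.subset_union_left) (Set.toFinite _)) h
    · set D : Set V := {x | (deleteSet G X).Reachable v x} with hDdef
      have hDsub : D ⊆ Cᶜ ∪ X := by
        intro x hx
        by_cases hxX : x ∈ X
        · exact Or.inr hxX
        · left
          intro hxC
          exact hnr (hxC.trans hx.symm)
      have huD : u ∉ D := fun h' => hnr h'.symm
      refine ⟨D, ?_, Or.inr ⟨huD, SimpleGraph.Reachable.refl v⟩, comp_boundary hv⟩
      rw [Set.inter_univ] at h
      exact le_trans (Set.ncard_le_ncard hDsub (Set.toFinite _)) h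
  · rintro ⟨A, _, h2, h3⟩ hr
    rcases h2 with ⟨huA, hvA⟩ | ⟨huA, hvA⟩
    · obtain ⟨p⟩ := hr
      exact hvA (walk_stays h3 p huA)
    · obtain ⟨p⟩ := hr.symm
      exact huA (walk_stays h3 p hvA)
end

section
/- Let σ be a finite relational signature and q ∈ ℕ. If 𝔸₁ ≡_q 𝔸₂ and 𝔹₁ ≡_q 𝔹₂ are σ-structures, then the disjoint unions satisfy 𝔸₁ ⊕ 𝔹₁ ≡_q 𝔸₂ ⊕ 𝔹₂, where the disjoint union of two σ-structures is the σ-structure whose universe is the disjoint sum of the two universes and in which each relation symbol is interpreted as the union of its interpretations in the two structures. -/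
open FirstOrder FirstOrder.Language

/-- Quantifier rank of a first-order (bounded) formula. -/
def qRank {L : Language} {α : Type*} : ∀ {n : ℕ}, L.BoundedFormula α n → ℕ
  | _, .falsum => 0
  | _, .equal _ _ => 0
  | _, .rel _ _ => 0
  | _, .imp f g => max (qRank f) (qRank g)
  | _, .all f => qRank f + 1

/-- Two structures are `q`-equivalent if they satisfy the same sentences of
quantifier rank at most `q`. -/
def EquivQ (L : Language) (q : ℕ) (M N : Type*) [L.Structure M] [L.Structure N] : Prop :=
  ∀ φ : L.Sentence, qRank φ ≤ q → (M ⊨ φ ↔ N ⊨ φ)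

/-- The disjoint union of two structures over a relational language: each relation symbol
is interpreted as the union of its interpretations in the two structures. -/
def sumStructure (L : Language) [L.IsRelational] (M N : Type*) [L.Structure M] [L.Structure N] :
    L.Structure (M ⊕ N) where
  funMap := fun f => isEmptyElim f
  RelMap := fun {n} R v =>
    (∃ w : Fin n → M, v = Sum.inl ∘ w ∧ Structure.RelMap R w) ∨
    (∃ w : Fin n → N, v = Sum.inr ∘ w ∧ Structure.RelMap R w)

namespace Stmt2Aux

variable {L : Language}

/-- Atomic formula shapes over `k` variables. -/
def Atom (L : Language) (k : ℕ) : Type _ :=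
  (Fin k × Fin k) ⊕ (Σ p : (Σ n, L.Relations n), Fin p.1 → Fin k)

instance {k : ℕ} [Finite (Σ n, L.Relations n)] : Finite (Atom L k) := by
  unfold Atom; infer_instance

variable [L.IsRelational]

/-- In a relational language every term over `Empty ⊕ Fin k` is a variable. -/
def termIdx : ∀ {k : ℕ}, L.Term (Empty ⊕ Fin k) → Fin k
  | _, .var (.inl e) => isEmptyElim e
  | _, .var (.inr i) => i
  | _, .func f _ => isEmptyElim f

theorem realize_termIdx {M : Type*} [L.Structure M] {k : ℕ} (t : L.Term (Empty ⊕ Fin k))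
    (v : Empty ⊕ Fin k → M) : t.realize v = v (.inr (termIdx t)) := by
  match t with
  | .var (.inl e) => exact isEmptyElim e
  | .var (.inr i) => rfl
  | .func f _ => exact isEmptyElim f

def atomEval (M : Type*) [L.Structure M] : ∀ {k : ℕ}, Atom L k → (Fin k → M) → Prop
  | _, .inl (i, j), a => a i = a j
  | _, .inr ⟨⟨_, R⟩, v⟩, a => Structure.RelMap R (a ∘ v)

noncomputable def bval (p : Prop) : Bool := @decide p (Classical.propDecidable p)

@[simp] theorem bval_iff (p : Prop) : bval p = true ↔ p := by
  unfold bval; exact @decide_eq_true_iff p (Classical.propDecidable p)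

/-- Codes for formulas of quantifier rank at most `q` with `k` variables. -/
def Code (L : Language) : ℕ → ℕ → Type _
  | 0, k => (Atom L k → Bool) → Bool
  | q+1, k => (Atom L k → Bool) → (Code L q (k+1) → Bool) → Bool

theorem finiteCode [Finite (Σ n, L.Relations n)] : ∀ (q k : ℕ), Finite (Code L q k) := by
  intro q
  induction q with
  | zero => intro k; unfold Code; infer_instance
  | succ q ih => intro k; have := ih (k+1); unfold Code; infer_instance

def code : ∀ (q : ℕ) {k : ℕ}, L.BoundedFormula Empty k → Code L q k
  | 0, _, .falsum => fun _ => false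
  | 0, _, .equal t₁ t₂ => fun v => v (.inl (termIdx t₁, termIdx t₂))
  | 0, _, .rel R ts => fun v => v (.inr ⟨⟨_, R⟩, fun l => termIdx (ts l)⟩)
  | 0, _, .imp f g => fun v => !(code 0 f v) || code 0 g v
  | 0, _, .all _ => fun _ => true
  | q+1, _, .falsum => fun _ _ => false
  | q+1, _, .equal t₁ t₂ => fun v _ => v (.inl (termIdx t₁, termIdx t₂))
  | q+1, _, .rel R ts => fun v _ => v (.inr ⟨⟨_, R⟩, fun l => termIdx (ts l)⟩)
  | q+1, _, .imp f g => fun v w => !(code (q+1) f v w) || code (q+1) g v w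
  | q+1, _, .all f => fun _ w => w (code q f)

noncomputable def decode (M : Type*) [L.Structure M] :
    ∀ (q : ℕ) {k : ℕ}, Code L q k → (Fin k → M) → Prop
  | 0, _, γ, a => γ (fun x => bval (atomEval M x a)) = true
  | q+1, _, γ, a =>
      γ (fun x => bval (atomEval M x a))
        (fun γ' => bval (∀ m : M, decode M q γ' (Fin.snoc a m))) = true

theorem realize_iff_decode {M : Type*} [L.Structure M] :
    ∀ {k : ℕ} (φ : L.BoundedFormula Empty k) (q : ℕ), qRank φ ≤ q →
      ∀ a : Fin k → M, (φ.Realize default a ↔ decode M q (code q φ) a) := by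
  intro k φ
  induction φ with
  | falsum =>
    intro q _ a
    cases q <;> simp [BoundedFormula.Realize, decode, code]
  | equal t₁ t₂ =>
    intro q _ a
    have h : (BoundedFormula.equal t₁ t₂).Realize (default : Empty → M) a ↔
        a (termIdx t₁) = a (termIdx t₂) := by
      simp only [BoundedFormula.Realize, realize_termIdx]
      simp
    cases q <;> simp [h, decode, code, atomEval]
  | rel R ts =>
    intro q _ a
    have h : (BoundedFormula.rel R ts).Realize (default : Empty → M) a ↔
        Structure.RelMap R (a ∘ fun l => termIdx (ts l)) := by
      simp only [BoundedFormula.Realize, realize_termIdx]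
      exact Iff.rfl
    cases q <;> simp [h, decode, code, atomEval]
  | imp f g ihf ihg =>
    intro q hq a
    have hf : qRank f ≤ q := le_trans (le_max_left _ _) hq
    have hg : qRank g ≤ q := le_trans (le_max_right _ _) hq
    have rf := ihf q hf a
    have rg := ihg q hg a
    cases q with
    | zero =>
      simp only [BoundedFormula.realize_imp, rf, rg, decode, code]
      cases hcf : code 0 f (fun x => bval (atomEval M x a)) <;>
        cases hcg : code 0 g (fun x => bval (atomEval M x a)) <;> simp [hcf, hcg]
    | succ q =>
      simp only [BoundedFormula.realize_imp, rf, rg, decode, code]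
      cases hcf : code (q+1) f (fun x => bval (atomEval M x a))
          (fun γ' => bval (∀ m : M, decode M q γ' (Fin.snoc a m))) <;>
        cases hcg : code (q+1) g (fun x => bval (atomEval M x a))
          (fun γ' => bval (∀ m : M, decode M q γ' (Fin.snoc a m))) <;> simp [hcf, hcg]
  | all f ih =>
    intro q hq a
    cases q with
    | zero => exact absurd hq (by simp [qRank])
    | succ q =>
      have hf : qRank f ≤ q := by
        have : qRank f + 1 ≤ q + 1 := hq
        omega
      simp only [BoundedFormula.realize_all, decode, code, bval_iff]
      exact forall_congr' fun m => ih q hf (Fin.snoc a m)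

theorem code_eq_realize {M : Type*} [L.Structure M] {k : ℕ} {φ ψ : L.BoundedFormula Empty k}
    {q : ℕ} (hφ : qRank φ ≤ q) (hψ : qRank ψ ≤ q) (h : code q φ = code q ψ)
    (a : Fin k → M) : φ.Realize default a ↔ ψ.Realize default a := by
  rw [realize_iff_decode φ q hφ a, realize_iff_decode ψ q hψ a, h]

section QR
variable {α : Type*} {n : ℕ}


@[simp] theorem qRank_bot : qRank (⊥ : L.BoundedFormula α n) = 0 := rfl
@[simp] theorem qRank_imp (f g : L.BoundedFormula α n) :
    qRank (f.imp g) = max (qRank f) (qRank g) := rfl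
@[simp] theorem qRank_not (f : L.BoundedFormula α n) : qRank f.not = qRank f := by
  show max (qRank f) 0 = qRank f
  simp
@[simp] theorem qRank_top : qRank (⊤ : L.BoundedFormula α n) = 0 := rfl
@[simp] theorem qRank_inf (f g : L.BoundedFormula α n) :
    qRank (f ⊓ g) = max (qRank f) (qRank g) := by
  have h : f ⊓ g = (f.imp g.not).not := rfl
  rw [h, qRank_not, qRank_imp, qRank_not]
@[simp] theorem qRank_all (f : L.BoundedFormula α (n+1)) : qRank f.all = qRank f + 1 := rfl
@[simp] theorem qRank_ex (f : L.BoundedFormula α (n+1)) : qRank f.ex = qRank f + 1 := by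
  have h : f.ex = f.not.all.not := rfl
  rw [h, qRank_not, qRank_all, qRank_not]

theorem qRank_foldr_le {q : ℕ} (l : List (L.BoundedFormula α n))
    (h : ∀ ψ ∈ l, qRank ψ ≤ q) : qRank (l.foldr (· ⊓ ·) ⊤) ≤ q := by
  induction l with
  | nil => simp
  | cons x xs ih =>
    simp only [List.foldr_cons, qRank_inf, max_le_iff]
    exact ⟨h x List.mem_cons_self, ih fun ψ hψ => h ψ (List.mem_cons_of_mem _ hψ)⟩

theorem realize_foldr_inf {M : Type*} [L.Structure M] (l : List (L.BoundedFormula α n))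
    (v : α → M) (xs : Fin n → M) :
    (l.foldr (· ⊓ ·) ⊤).Realize v xs ↔ ∀ ψ ∈ l, ψ.Realize v xs := by
  induction l with
  | nil => simp
  | cons x xs' ih => simp [ih]


end QR

section Forth
variable [Finite (Σ n, L.Relations n)]
variable {M : Type*} {N : Type*} [L.Structure M] [L.Structure N]

/-- `q`-equivalence of tuples. -/
def EquivT (q : ℕ) {k : ℕ} (a : Fin k → M) (b : Fin k → N) : Prop :=
  ∀ φ : L.BoundedFormula Empty k, qRank φ ≤ q → (φ.Realize default a ↔ φ.Realize default b)

theorem EquivT.mono {q q' : ℕ} {k : ℕ} {a : Fin k → M} {b : Fin k → N}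
    (h : EquivT (L := L) q a b) (hq : q' ≤ q) : EquivT (L := L) q' a b :=
  fun φ hφ => h φ (le_trans hφ hq)

theorem forth {q k : ℕ} {a : Fin k → M} {b : Fin k → N} (h : EquivT (L := L) (q+1) a b)
    (m : M) : ∃ n : N, EquivT (L := L) q (Fin.snoc a m) (Fin.snoc b n) := by
  by_contra hc
  push_neg at hc
  have hsel : ∀ n : N, ∃ ψ : L.BoundedFormula Empty (k+1), qRank ψ ≤ q ∧
      ψ.Realize default (Fin.snoc a m) ∧ ¬ ψ.Realize default (Fin.snoc b n) := by
    intro n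
    have := hc n
    unfold EquivT at this
    push_neg at this
    obtain ⟨φ, hφq, hφ⟩ := this
    rcases hφ with ⟨hP, hQ⟩ | ⟨hP, hQ⟩
    · exact ⟨φ, hφq, hP, hQ⟩
    · exact ⟨φ.not, by simpa using hφq, by simpa using hP, by simpa using hQ⟩
  choose ψ hq hm hn using hsel
  haveI : Finite (Code L q (k+1)) := finiteCode q (k+1)
  set F : N → Code L q (k+1) := fun n => code q (ψ n) with hF
  have hfin : (Set.range F).Finite :=
    Set.Finite.subset Set.finite_univ (Set.subset_univ _)
  set T := hfin.toFinset with hT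
  have hselγ : ∀ x : {γ // γ ∈ T}, ∃ n : N, F n = x.1 := by
    intro x
    exact hfin.mem_toFinset.mp x.2
  choose sel hsel2 using hselγ
  set lst : List (L.BoundedFormula Empty (k+1)) :=
    T.attach.toList.map (fun x => ψ (sel x)) with hlst
  have hrank : ∀ θ ∈ lst, qRank θ ≤ q := by
    intro θ hθ
    rw [hlst, List.mem_map] at hθ
    obtain ⟨x, _, rfl⟩ := hθ
    exact hq _
  set Φ : L.BoundedFormula Empty k := (lst.foldr (· ⊓ ·) ⊤).ex with hΦ
  have hΦq : qRank Φ ≤ q + 1 := by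
    rw [hΦ, qRank_ex]
    exact Nat.add_le_add_right (qRank_foldr_le _ hrank) 1
  have hMΦ : Φ.Realize default a := by
    rw [hΦ, BoundedFormula.realize_ex]
    refine ⟨m, (realize_foldr_inf _ _ _).mpr ?_⟩
    intro θ hθ
    rw [hlst, List.mem_map] at hθ
    obtain ⟨x, _, rfl⟩ := hθ
    exact hm _
  have hNΦ := (h Φ hΦq).mp hMΦ
  rw [hΦ, BoundedFormula.realize_ex] at hNΦ
  obtain ⟨nn, hnn⟩ := hNΦ
  rw [realize_foldr_inf] at hnn
  have hγT : F nn ∈ T := hfin.mem_toFinset.mpr ⟨nn, rfl⟩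
  have hmem : ψ (sel ⟨F nn, hγT⟩) ∈ lst := by
    rw [hlst, List.mem_map]
    exact ⟨⟨F nn, hγT⟩, by simp, rfl⟩
  have hreal : (ψ (sel ⟨F nn, hγT⟩)).Realize default (Fin.snoc b nn) := hnn _ hmem
  have hcode : code q (ψ (sel ⟨F nn, hγT⟩)) = code q (ψ nn) := hsel2 ⟨F nn, hγT⟩
  exact hn nn ((code_eq_realize (hq _) (hq _) hcode (Fin.snoc b nn)).mp hreal)

end Forth

section BFsec
variable {M : Type*} {N : Type*} [L.Structure M] [L.Structure N]

/-- Agreement on atomic facts. -/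
def Atomic {α : Type} (a : α → M) (b : α → N) : Prop :=
  (∀ i j, a i = a j ↔ b i = b j) ∧
  ∀ (n : ℕ) (R : L.Relations n) (v : Fin n → α),
    Structure.RelMap R (a ∘ v) ↔ Structure.RelMap R (b ∘ v)

/-- Extend a tuple by one element. -/
def ext' {α : Type} {M : Type*} (a : α → M) (m : M) : Option α → M := fun o => o.elim m a

/-- The semantic back-and-forth relation. -/
def BF : ∀ (_q : ℕ) {α : Type}, (α → M) → (α → N) → Prop
  | 0, _, a, b => Atomic (L := L) a b
  | q+1, _, a, b => Atomic (L := L) a b ∧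
      (∀ m, ∃ n, BF q (ext' a m) (ext' b n)) ∧
      (∀ n, ∃ m, BF q (ext' a m) (ext' b n))

theorem Atomic.reindex {α β : Type} {a : α → M} {b : α → N}
    (h : Atomic (L := L) a b) (e : β → α) : Atomic (L := L) (a ∘ e) (b ∘ e) :=
  ⟨fun i j => h.1 (e i) (e j), fun n R v => h.2 n R (e ∘ v)⟩

theorem ext'_comp {α β : Type} {P : Type*} (a : α → P) (m : P) (e : β → α) :
    ext' (a ∘ e) m = ext' a m ∘ Option.map e := by
  funext o; cases o <;> rfl

theorem BF.reindex : ∀ {q : ℕ} {α β : Type} {a : α → M} {b : α → N},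
    BF (L := L) q a b → ∀ (e : β → α), BF (L := L) q (a ∘ e) (b ∘ e) := by
  intro q
  induction q with
  | zero => intro α β a b h e; exact Atomic.reindex h e
  | succ q ih =>
    intro α β a b h e
    refine ⟨Atomic.reindex h.1 e, ?_, ?_⟩
    · intro m
      obtain ⟨n, hn⟩ := h.2.1 m
      refine ⟨n, ?_⟩
      rw [ext'_comp, ext'_comp]
      exact ih hn (Option.map e)
    · intro n
      obtain ⟨m, hm⟩ := h.2.2 n
      refine ⟨m, ?_⟩
      rw [ext'_comp, ext'_comp]
      exact ih hm (Option.map e)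

theorem BF.atomic {q : ℕ} {α : Type} {a : α → M} {b : α → N}
    (h : BF (L := L) q a b) : Atomic (L := L) a b := by
  cases q with
  | zero => exact h
  | succ q => exact h.1

theorem BF.mono : ∀ {q : ℕ} {α : Type} {a : α → M} {b : α → N},
    BF (L := L) (q+1) a b → BF (L := L) q a b := by
  intro q
  induction q with
  | zero => intro α a b h; exact h.1
  | succ q ih =>
    intro α a b h
    refine ⟨h.1, ?_, ?_⟩
    · intro m; obtain ⟨n, hn⟩ := h.2.1 m; exact ⟨n, ih hn⟩
    · intro n; obtain ⟨m, hm⟩ := h.2.2 n; exact ⟨m, ih hm⟩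

/-- Map sending `Fin (k+1)` to `Option (Fin k)`, last to `none`. -/
def eFin (k : ℕ) : Fin (k+1) → Option (Fin k) :=
  fun i => Fin.lastCases none (fun j => some j) i

theorem snoc_eq_ext' {P : Type*} {k : ℕ} (a : Fin k → P) (m : P) :
    Fin.snoc a m = ext' a m ∘ eFin k := by
  funext i
  refine Fin.lastCases ?_ ?_ i
  · simp [eFin, ext', Fin.snoc_last]
  · intro j; simp [eFin, ext', Fin.snoc_castSucc]

/-- Map sending `Option (Fin k)` to `Fin (k+1)`. -/
def eOpt (k : ℕ) : Option (Fin k) → Fin (k+1) :=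
  fun o => o.elim (Fin.last k) Fin.castSucc

theorem ext'_eq_snoc {P : Type*} {k : ℕ} (a : Fin k → P) (m : P) :
    ext' a m = Fin.snoc a m ∘ eOpt k := by
  funext o
  cases o with
  | none => simp [eOpt, ext', Fin.snoc_last]
  | some j => simp [eOpt, ext', Fin.snoc_castSucc]

theorem BF_realize : ∀ {k : ℕ} (φ : L.BoundedFormula Empty k) (q : ℕ), qRank φ ≤ q →
    ∀ (a : Fin k → M) (b : Fin k → N), BF (L := L) q a b →
      (φ.Realize default a ↔ φ.Realize default b) := by
  intro k φ
  induction φ with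
  | falsum => intro q _ a b _; exact Iff.rfl
  | equal t₁ t₂ =>
    intro q _ a b h
    have h1 := h.atomic.1 (termIdx t₁) (termIdx t₂)
    show t₁.realize (Sum.elim default a) = t₂.realize (Sum.elim default a) ↔
        t₁.realize (Sum.elim default b) = t₂.realize (Sum.elim default b)
    rw [realize_termIdx, realize_termIdx, realize_termIdx, realize_termIdx]
    exact h1
  | rel R ts =>
    intro q _ a b h
    have h2 := h.atomic.2 _ R (fun l => termIdx (ts l))
    show Structure.RelMap R (fun i => (ts i).realize (Sum.elim default a)) ↔
        Structure.RelMap R (fun i => (ts i).realize (Sum.elim default b))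
    have ea : (fun i => (ts i).realize (Sum.elim default a)) =
        a ∘ fun l => termIdx (ts l) := by
      funext i; exact realize_termIdx (ts i) _
    have eb : (fun i => (ts i).realize (Sum.elim default b)) =
        b ∘ fun l => termIdx (ts l) := by
      funext i; exact realize_termIdx (ts i) _
    rw [ea, eb]
    exact h2
  | imp f g ihf ihg =>
    intro q hq a b h
    have hf := ihf q (le_trans (le_max_left _ _) hq) a b h
    have hg := ihg q (le_trans (le_max_right _ _) hq) a b h
    simp only [BoundedFormula.realize_imp, hf, hg]
  | all f ih =>
    intro q hq a b h
    cases q with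
    | zero => exact absurd hq (by simp [qRank])
    | succ q =>
      have hf : qRank f ≤ q := by
        have : qRank f + 1 ≤ q + 1 := hq
        omega
      simp only [BoundedFormula.realize_all]
      constructor
      · intro hr n
        obtain ⟨m, hm⟩ := h.2.2 n
        have hbf : BF (L := L) q (Fin.snoc a m) (Fin.snoc b n) := by
          rw [snoc_eq_ext', snoc_eq_ext']
          exact hm.reindex (eFin _)
        exact (ih q hf _ _ hbf).mp (hr m)
      · intro hr m
        obtain ⟨n, hn⟩ := h.2.1 m
        have hbf : BF (L := L) q (Fin.snoc a m) (Fin.snoc b n) := by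
          rw [snoc_eq_ext', snoc_eq_ext']
          exact hn.reindex (eFin _)
        exact (ih q hf _ _ hbf).mpr (hr n)

theorem atomic_of_equivT {q : ℕ} {k : ℕ} {a : Fin k → M} {b : Fin k → N}
    (h : EquivT (L := L) q a b) : Atomic (L := L) a b := by
  constructor
  · intro i j
    have := h ((Term.var (Sum.inr i) : L.Term (Empty ⊕ Fin k)).bdEqual
        (Term.var (Sum.inr j))) (Nat.zero_le q)
    simpa using this
  · intro n R v
    exact h (BoundedFormula.rel R (fun l => Term.var (Sum.inr (v l)))) (Nat.zero_le q)

variable [Finite (Σ n, L.Relations n)]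

theorem equivT_to_BF : ∀ (q : ℕ) {k : ℕ} (a : Fin k → M) (b : Fin k → N),
    EquivT (L := L) q a b → BF (L := L) q a b := by
  intro q
  induction q with
  | zero => intro k a b h; exact atomic_of_equivT h
  | succ q ih =>
    intro k a b h
    refine ⟨atomic_of_equivT h, ?_, ?_⟩
    · intro m
      obtain ⟨n, hn⟩ := forth h m
      refine ⟨n, ?_⟩
      rw [ext'_eq_snoc, ext'_eq_snoc]
      exact (ih _ _ hn).reindex (eOpt k)
    · intro n
      have hflip : EquivT (L := L) (q+1) b a := fun φ hφ => (h φ hφ).symm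
      obtain ⟨m, hm⟩ := forth hflip n
      have hm' : EquivT (L := L) q (Fin.snoc a m) (Fin.snoc b n) :=
        fun φ hφ => (hm φ hφ).symm
      refine ⟨m, ?_⟩
      rw [ext'_eq_snoc, ext'_eq_snoc]
      exact (ih _ _ hm').reindex (eOpt k)

end BFsec

section Comb

/-- Glue two partial tuples along a Boolean pattern. -/
def glue {α : Type} {A B : Type*} (s : α → Bool) (u : {i // s i = true} → A)
    (v : {i // s i = false} → B) : α → A ⊕ B :=
  fun i => if h : s i = true then Sum.inl (u ⟨i, h⟩)
    else Sum.inr (v ⟨i, eq_false_of_ne_true h⟩)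

def sOpt {α : Type} (s : α → Bool) : Option α → Bool := fun o => o.elim true s

def eL {α : Type} (s : α → Bool) : {o : Option α // sOpt s o = true} → Option {i // s i = true}
  | ⟨none, _⟩ => none
  | ⟨some i, h⟩ => some ⟨i, h⟩

def eR {α : Type} (s : α → Bool) : {o : Option α // sOpt s o = false} → {i // s i = false}
  | ⟨none, h⟩ => absurd h (by simp [sOpt])
  | ⟨some i, h⟩ => ⟨i, h⟩

def sOptF {α : Type} (s : α → Bool) : Option α → Bool := fun o => o.elim false s

def eLF {α : Type} (s : α → Bool) : {o : Option α // sOptF s o = true} → {i // s i = true}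
  | ⟨none, h⟩ => absurd h (by simp [sOptF])
  | ⟨some i, h⟩ => ⟨i, h⟩

def eRF {α : Type} (s : α → Bool) : {o : Option α // sOptF s o = false} → Option {i // s i = false}
  | ⟨none, _⟩ => none
  | ⟨some i, h⟩ => some ⟨i, h⟩

theorem glue_opt_inl {α : Type} {A B : Type*} (s : α → Bool) (u : {i // s i = true} → A)
    (v : {i // s i = false} → B) (x : A) :
    glue (sOpt s) (ext' u x ∘ eL s) (v ∘ eR s) = ext' (glue s u v) (Sum.inl x) := by
  funext o
  cases o with
  | none => rfl
  | some i =>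
    show glue (sOpt s) _ _ (some i) = glue s u v i
    by_cases h : s i = true
    · simp only [glue]
      rw [dif_pos (show sOpt s (some i) = true from h), dif_pos h]; rfl
    · simp only [glue]
      rw [dif_neg (show ¬ sOpt s (some i) = true from h), dif_neg h]; rfl

theorem glue_opt_inr {α : Type} {A B : Type*} (s : α → Bool) (u : {i // s i = true} → A)
    (v : {i // s i = false} → B) (x : B) :
    glue (sOptF s) (u ∘ eLF s) (ext' v x ∘ eRF s) = ext' (glue s u v) (Sum.inr x) := by
  funext o
  cases o with
  | none => rfl
  | some i =>
    show glue (sOptF s) _ _ (some i) = glue s u v i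
    by_cases h : s i = true
    · simp only [glue]
      rw [dif_pos (show sOptF s (some i) = true from h), dif_pos h]; rfl
    · simp only [glue]
      rw [dif_neg (show ¬ sOptF s (some i) = true from h), dif_neg h]; rfl

variable [L.IsRelational]
variable {A₁ A₂ B₁ B₂ : Type*} [L.Structure A₁] [L.Structure A₂]
  [L.Structure B₁] [L.Structure B₂]

theorem relMap_sum {A B : Type*} [L.Structure A] [L.Structure B] {n : ℕ}
    (R : L.Relations n) (vv : Fin n → A ⊕ B) :
    @Structure.RelMap L (A ⊕ B) (sumStructure L A B) n R vv ↔
      ((∃ w : Fin n → A, vv = Sum.inl ∘ w ∧ Structure.RelMap R w) ∨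
       (∃ w : Fin n → B, vv = Sum.inr ∘ w ∧ Structure.RelMap R w)) :=
  Iff.rfl

theorem glue_rel_iff {α : Type} {A B : Type*} [L.Structure A] [L.Structure B]
    (s : α → Bool) (u : {i // s i = true} → A) (v : {i // s i = false} → B)
    {n : ℕ} (R : L.Relations n) (vv : Fin n → α) :
    @Structure.RelMap L (A ⊕ B) (sumStructure L A B) n R (glue s u v ∘ vv) ↔
      ((∃ h : ∀ l, s (vv l) = true, Structure.RelMap R (fun l => u ⟨vv l, h l⟩)) ∨
       (∃ h : ∀ l, s (vv l) = false, Structure.RelMap R (fun l => v ⟨vv l, h l⟩))) := by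
  rw [relMap_sum]
  apply or_congr
  · constructor
    · rintro ⟨w, hw, hR⟩
      have hs : ∀ l, s (vv l) = true := by
        intro l
        have := congr_fun hw l
        by_contra hc
        simp only [Function.comp_apply, glue, hc, dite_false] at this
        exact absurd this (by simp)
      refine ⟨hs, ?_⟩
      have hwe : w = fun l => u ⟨vv l, hs l⟩ := by
        funext l
        have := congr_fun hw l
        simp only [Function.comp_apply, glue, hs l, dite_true] at this
        exact (Sum.inl_injective this).symm
      rwa [← hwe]
    · rintro ⟨h, hR⟩
      refine ⟨fun l => u ⟨vv l, h l⟩, ?_, hR⟩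
      funext l
      simp only [Function.comp_apply, glue, h l, dite_true]
  · constructor
    · rintro ⟨w, hw, hR⟩
      have hs : ∀ l, s (vv l) = false := by
        intro l
        have := congr_fun hw l
        by_contra hc
        rw [Bool.not_eq_false] at hc
        simp only [Function.comp_apply, glue, hc, dite_true] at this
        exact absurd this (by simp)
      refine ⟨hs, ?_⟩
      have hwe : w = fun l => v ⟨vv l, hs l⟩ := by
        funext l
        have := congr_fun hw l
        have hs' : ¬ s (vv l) = true := by simp [hs l]
        simp only [Function.comp_apply, glue, hs', dite_false] at this
        exact (Sum.inr_injective this).symm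
      rwa [← hwe]
    · rintro ⟨h, hR⟩
      refine ⟨fun l => v ⟨vv l, h l⟩, ?_, hR⟩
      funext l
      simp [glue, h l]

theorem atomic_glue {α : Type} {s : α → Bool}
    {u₁ : {i // s i = true} → A₁} {u₂ : {i // s i = true} → A₂}
    {v₁ : {i // s i = false} → B₁} {v₂ : {i // s i = false} → B₂}
    (hA : Atomic (L := L) u₁ u₂) (hB : Atomic (L := L) v₁ v₂) :
    @Atomic L (A₁ ⊕ B₁) (A₂ ⊕ B₂) (sumStructure L A₁ B₁) (sumStructure L A₂ B₂) α
      (glue s u₁ v₁) (glue s u₂ v₂) := by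
  constructor
  · intro i j
    by_cases hi : s i = true
    · by_cases hj : s j = true
      · simp only [glue, hi, hj, dite_true, Sum.inl.injEq]
        exact hA.1 _ _
      · simp [glue, hi, hj]
    · by_cases hj : s j = true
      · simp [glue, hi, hj]
      · have hi' : s i = false := eq_false_of_ne_true hi
        have hj' : s j = false := eq_false_of_ne_true hj
        simp only [glue, hi', hj', Bool.false_eq_true, dite_false, Sum.inr.injEq]
        exact hB.1 _ _
  · intro n R vv
    rw [glue_rel_iff, glue_rel_iff]
    apply or_congr
    · exact exists_congr fun h => hA.2 n R (fun l => ⟨vv l, h l⟩)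
    · exact exists_congr fun h => hB.2 n R (fun l => ⟨vv l, h l⟩)

theorem BF_glue : ∀ (q : ℕ) {α : Type} (s : α → Bool)
    (u₁ : {i // s i = true} → A₁) (u₂ : {i // s i = true} → A₂)
    (v₁ : {i // s i = false} → B₁) (v₂ : {i // s i = false} → B₂),
    BF (L := L) q u₁ u₂ → BF (L := L) q v₁ v₂ →
    @BF L (A₁ ⊕ B₁) (A₂ ⊕ B₂) (sumStructure L A₁ B₁) (sumStructure L A₂ B₂) q α
      (glue s u₁ v₁) (glue s u₂ v₂) := by
  intro q
  induction q with
  | zero =>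
    intro α s u₁ u₂ v₁ v₂ hA hB
    exact atomic_glue hA hB
  | succ q ih =>
    intro α s u₁ u₂ v₁ v₂ hA hB
    refine ⟨atomic_glue hA.atomic hB.atomic, ?_, ?_⟩
    · intro m
      cases m with
      | inl x =>
        obtain ⟨y, hy⟩ := hA.2.1 x
        refine ⟨Sum.inl y, ?_⟩
        rw [← glue_opt_inl, ← glue_opt_inl]
        exact ih (sOpt s) _ _ _ _ (hy.reindex (eL s)) (hB.mono.reindex (eR s))
      | inr x =>
        obtain ⟨y, hy⟩ := hB.2.1 x
        refine ⟨Sum.inr y, ?_⟩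
        rw [← glue_opt_inr, ← glue_opt_inr]
        exact ih (sOptF s) _ _ _ _ (hA.mono.reindex (eLF s)) (hy.reindex (eRF s))
    · intro m
      cases m with
      | inl x =>
        obtain ⟨y, hy⟩ := hA.2.2 x
        refine ⟨Sum.inl y, ?_⟩
        rw [← glue_opt_inl, ← glue_opt_inl]
        exact ih (sOpt s) _ _ _ _ (hy.reindex (eL s)) (hB.mono.reindex (eR s))
      | inr x =>
        obtain ⟨y, hy⟩ := hB.2.2 x
        refine ⟨Sum.inr y, ?_⟩
        rw [← glue_opt_inr, ← glue_opt_inr]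
        exact ih (sOptF s) _ _ _ _ (hA.mono.reindex (eLF s)) (hy.reindex (eRF s))

end Comb

end Stmt2Aux

open Stmt2Aux in
theorem stmt2 {L : Language} [L.IsRelational] [Finite (Σ n, L.Relations n)] (q : ℕ)
    (A₁ A₂ B₁ B₂ : Type*) [L.Structure A₁] [L.Structure A₂] [L.Structure B₁] [L.Structure B₂]
    (hA : EquivQ L q A₁ A₂) (hB : EquivQ L q B₁ B₂) :
    @EquivQ L q (A₁ ⊕ B₁) (A₂ ⊕ B₂) (sumStructure L A₁ B₁) (sumStructure L A₂ B₂) := by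
  letI : L.Structure (A₁ ⊕ B₁) := sumStructure L A₁ B₁
  letI : L.Structure (A₂ ⊕ B₂) := sumStructure L A₂ B₂
  intro φ hφ
  have eA : EquivT (L := L) q (default : Fin 0 → A₁) (default : Fin 0 → A₂) :=
    fun ψ hψ => hA ψ hψ
  have eB : EquivT (L := L) q (default : Fin 0 → B₁) (default : Fin 0 → B₂) :=
    fun ψ hψ => hB ψ hψ
  have bfA := equivT_to_BF (L := L) q _ _ eA
  have bfB := equivT_to_BF (L := L) q _ _ eB
  have g := BF_glue (L := L) q (fun _ : Fin 0 => true)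
    ((default : Fin 0 → A₁) ∘ Subtype.val) ((default : Fin 0 → A₂) ∘ Subtype.val)
    ((default : Fin 0 → B₁) ∘ Subtype.val) ((default : Fin 0 → B₂) ∘ Subtype.val)
    (bfA.reindex _) (bfB.reindex _)
  have e1 : glue (fun _ : Fin 0 => true) ((default : Fin 0 → A₁) ∘ Subtype.val)
      ((default : Fin 0 → B₁) ∘ Subtype.val) = (default : Fin 0 → A₁ ⊕ B₁) :=
    funext fun i => i.elim0
  have e2 : glue (fun _ : Fin 0 => true) ((default : Fin 0 → A₂) ∘ Subtype.val)
      ((default : Fin 0 → B₂) ∘ Subtype.val) = (default : Fin 0 → A₂ ⊕ B₂) :=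
    funext fun i => i.elim0
  rw [e1, e2] at g
  exact BF_realize (L := L) φ q hφ _ _ g
end

section
/- There is a function f : ℕ → ℕ such that every finite graph G satisfies cw(G) ≤ f(tw(G)); in particular, every class of graphs of bounded treewidth has bounded cliquewidth. -/
/-- A finite rooted tree, given by its root and parent function: iterating the parent
function from any node eventually reaches the root, and the root is its own parent. -/
structure ParentTree (ι : Type*) where
  root : ι
  parent : ι → ι
  parent_root : parent root = root
  reaches_root : ∀ x : ι, ∃ n : ℕ, parent^[n] x = root

/-- The undirected tree graph, whose edges join each non-root node to its parent. -/
def ParentTree.graph {ι : Type*} (T : ParentTree ι) : SimpleGraph ι where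
  Adj a b := a ≠ b ∧ (T.parent a = b ∨ T.parent b = a)
  symm := ⟨by intro a b h; exact ⟨h.1.symm, h.2.symm⟩⟩
  loopless := ⟨by intro a h; exact h.1 rfl⟩

/-- `(T, bag)` is a tree decomposition of `G`. -/
def IsTreeDecomp {ι V : Type*} (G : SimpleGraph V) (T : ParentTree ι) (bag : ι → Set V) : Prop :=
  (∀ u : V, ((T.graph).induce {x : ι | u ∈ bag x}).Connected) ∧
  (∀ u v : V, G.Adj u v → ∃ x : ι, u ∈ bag x ∧ v ∈ bag x)

/-- `G` has treewidth at most `k`: it has a tree decomposition all of whose bags have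
at most `k + 1` vertices. -/
def TreewidthLE {V : Type*} (G : SimpleGraph V) (k : ℕ) : Prop :=
  ∃ (ι : Type) (_ : Fintype ι) (T : ParentTree ι) (bag : ι → Set V),
    IsTreeDecomp G T bag ∧ ∀ x : ι, (bag x).ncard ≤ k + 1

/-- Cliquewidth expressions over `k` colors: create a single vertex with a color, recolor
along a function `[k] → [k]`, or join a finite family along a set `S` of (unordered,
possibly diagonal) pairs of colors. -/
inductive CWExpr (k : ℕ) : Type
  | single : Fin k → CWExpr k
  | recolor : (Fin k → Fin k) → CWExpr k → CWExpr k
  | join : Set (Sym2 (Fin k)) → (m : ℕ) → (Fin m → CWExpr k) → CWExpr k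

namespace CWExpr

/-- The vertex set of the `k`-colored graph that is the value of an expression. -/
def vertices {k : ℕ} : CWExpr k → Type
  | .single _ => Unit
  | .recolor _ e => e.vertices
  | .join _ m es => Σ i : Fin m, (es i).vertices

/-- The coloring of the value of an expression. -/
def color {k : ℕ} : (e : CWExpr k) → e.vertices → Fin k
  | .single c, _ => c
  | .recolor f e, v => f (e.color v)
  | .join _ _ es, ⟨i, v⟩ => (es i).color v

/-- The adjacency relation of the value of an expression: inside a member of a join the
edges are those of that member; between two distinct members of a join along `S`, a vertex
of color `i` and a vertex of color `j` are joined iff `{i,j} ∈ S`. -/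
def adjRel {k : ℕ} : (e : CWExpr k) → e.vertices → e.vertices → Prop
  | .single _, _, _ => False
  | .recolor _ e, u, v => e.adjRel u v
  | .join S _ es, ⟨i, u⟩, ⟨j, v⟩ =>
      (∃ h : i = j, (es j).adjRel (h ▸ u) v) ∨
      (i ≠ j ∧ s((es i).color u, (es j).color v) ∈ S)

/-- The underlying graph of the value of an expression. -/
def graph {k : ℕ} (e : CWExpr k) : SimpleGraph e.vertices :=
  SimpleGraph.fromRel e.adjRel

end CWExpr

/-- `G` has cliquewidth at most `k`: some `k`-coloring of `G` is the value of a
cliquewidth expression over `k` colors. -/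
def CliquewidthLE {V : Type*} (G : SimpleGraph V) (k : ℕ) : Prop :=
  ∃ e : CWExpr k, Nonempty (G ≃g e.graph)


namespace TW13
open Function

attribute [local instance 0] Classical.propDecidable

/-! ### Tree basics -/

variable {ι : Type} (T : ParentTree ι)

def des (a b : ι) : Prop := ∃ n, T.parent^[n] a = b

theorem des_refl (a : ι) : des T a a := ⟨0, rfl⟩

theorem des_parent (a : ι) : des T a (T.parent a) := ⟨1, rfl⟩

theorem des_trans {a b c : ι} (h1 : des T a b) (h2 : des T b c) : des T a c := by
  obtain ⟨n, hn⟩ := h1; obtain ⟨m, hm⟩ := h2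
  exact ⟨m + n, by rw [Function.iterate_add_apply, hn, hm]⟩

theorem iterate_root (n : ℕ) : T.parent^[n] T.root = T.root := by
  induction n with
  | zero => rfl
  | succ n ih => rw [Function.iterate_succ_apply', ih, T.parent_root]

noncomputable def depth (x : ι) : ℕ := Nat.find (T.reaches_root x)

theorem depth_spec (x : ι) : T.parent^[depth T x] x = T.root := Nat.find_spec (T.reaches_root x)

theorem depth_le {x : ι} {m : ℕ} (h : T.parent^[m] x = T.root) : depth T x ≤ m :=
  Nat.find_min' (T.reaches_root x) h

theorem root_of_depth_zero {x : ι} (h : depth T x = 0) : x = T.root := by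
  have := depth_spec T x; rwa [h] at this

theorem depth_root : depth T T.root = 0 := Nat.le_zero.mp (depth_le T rfl)

theorem des_root_of_le {a b : ι} {n : ℕ} (hn : T.parent^[n] a = b) (h : depth T a ≤ n) :
    b = T.root := by
  rw [← hn, ← Nat.sub_add_cancel h, Function.iterate_add_apply, depth_spec, iterate_root]

theorem des_depth_le {a b : ι} (h : des T a b) : depth T b ≤ depth T a := by
  obtain ⟨n, hn⟩ := h
  rcases le_or_gt n (depth T a) with hc | hc
  · have : T.parent^[depth T a - n] b = T.root := by
      rw [← hn, ← Function.iterate_add_apply, Nat.sub_add_cancel hc, depth_spec]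
    exact le_trans (depth_le T this) (Nat.sub_le _ _)
  · have hb : b = T.root := des_root_of_le T hn hc.le
    rw [hb, depth_root]
    exact Nat.zero_le _

theorem des_eq_of_depth_le {a b : ι} (h : des T a b) (hd : depth T a ≤ depth T b) : a = b := by
  obtain ⟨n, hn⟩ := h
  rcases le_or_gt n (depth T a) with hc | hc
  · have h2 : T.parent^[depth T a - n] b = T.root := by
      rw [← hn, ← Function.iterate_add_apply, Nat.sub_add_cancel hc, depth_spec]
    have h3 : depth T b ≤ depth T a - n := depth_le T h2
    have hn0 : n = 0 := by omega
    rw [hn0] at hn; exact hn.symm ▸ rfl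
  · have hb : b = T.root := des_root_of_le T hn hc.le
    subst hb
    rw [depth_root] at hd
    rw [root_of_depth_zero T (Nat.le_zero.mp hd)]

theorem des_antisymm {a b : ι} (h1 : des T a b) (h2 : des T b a) : a = b :=
  des_eq_of_depth_le T h1 (des_depth_le T h2)

theorem des_total {a b c : ι} (h1 : des T a b) (h2 : des T a c) : des T b c ∨ des T c b := by
  obtain ⟨n, hn⟩ := h1; obtain ⟨m, hm⟩ := h2
  rcases le_total n m with h | h
  · left; exact ⟨m - n, by rw [← hn, ← Function.iterate_add_apply, Nat.sub_add_cancel h, hm]⟩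
  · right; exact ⟨n - m, by rw [← hm, ← Function.iterate_add_apply, Nat.sub_add_cancel h, hn]⟩

theorem depth_child {y x : ι} (hp : T.parent y = x) (hne : y ≠ x) :
    depth T y = depth T x + 1 := by
  have hle : depth T y ≤ depth T x + 1 :=
    depth_le T (by rw [Function.iterate_succ_apply, hp, depth_spec])
  have hy0 : depth T y ≠ 0 := by
    intro h0
    have : y = T.root := root_of_depth_zero T h0
    rw [this] at hp; rw [this] at hne
    exact hne (by rw [← hp, T.parent_root])
  have hge : depth T x + 1 ≤ depth T y := by
    obtain ⟨m, hm⟩ : ∃ m, depth T y = m + 1 := ⟨depth T y - 1, by omega⟩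
    have key : T.parent^[m + 1] y = T.root := by rw [← hm]; exact depth_spec T y
    have h2 : T.parent^[m] x = T.root := by
      rw [← hp, ← Function.iterate_succ_apply]; exact key
    have := depth_le T h2
    omega
  omega

theorem children_not_des {y y' x : ι} (h : T.parent y = x) (h' : T.parent y' = x)
    (hy : y ≠ x) (hy' : y' ≠ x) (hne : y ≠ y') : ¬ des T y y' := by
  rintro ⟨n, hn⟩
  match n, hn with
  | 0, hn => exact hne hn
  | (m+1), hn =>
    have hxy' : des T x y' := ⟨m, by rw [← hn, Function.iterate_succ_apply, h]⟩
    have : y' = x := des_antisymm T ⟨1, h'⟩ hxy'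
    exact hy' this

theorem walk_through {a c b : ι} (w : T.graph.Walk a c) (hab : des T a b) (hcb : ¬ des T c b) :
    b ∈ w.support := by
  induction w with
  | nil => exact absurd hab hcb
  | @cons a a' c h w' ih =>
    by_cases hb : a = b
    · rw [SimpleGraph.Walk.support_cons]; exact hb ▸ List.mem_cons_self
    · have hab' : des T a' b := by
        rcases h.2 with hpa | hpa'
        · obtain ⟨n, hn⟩ := hab
          match n, hn with
          | 0, hn => exact absurd hn hb
          | (m+1), hn => exact ⟨m, by rw [← hn, Function.iterate_succ_apply, hpa]⟩
        · exact des_trans T ⟨1, hpa'⟩ hab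
      rw [SimpleGraph.Walk.support_cons]; exact List.mem_cons_of_mem _ (ih hab' hcb)

end TW13

namespace TW13

/-! ### Tree decompositions: tops and convexity -/

variable {ι V : Type} [Fintype ι] [Fintype V] (T : ParentTree ι) (G : SimpleGraph V)
  (bag : ι → Set V)

theorem walk_des {u : V} (t : ι)
    (htmin : ∀ z ∈ {x : ι | u ∈ bag x}, depth T t ≤ depth T z) :
    ∀ {z z' : ↥{x : ι | u ∈ bag x}} (_ : (T.graph.induce {x : ι | u ∈ bag x}).Walk z z'),
      z'.1 = t → des T z.1 t := by
  intro z z' w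
  induction w with
  | nil => rintro rfl; exact des_refl T _
  | @cons z z'' _ h w' ih =>
    intro ht
    have hadj : T.parent z.1 = z''.1 ∨ T.parent z''.1 = z.1 := h.2
    rcases hadj with hp | hp
    · exact des_trans T ⟨1, hp⟩ (ih ht)
    · rcases des_total T (⟨1, hp⟩ : des T z''.1 z.1) (ih ht) with h1 | h1
      · exact h1
      · exact ⟨0, (des_eq_of_depth_le T h1 (htmin z.1 z.2)).symm⟩

theorem exists_top (hd : IsTreeDecomp G T bag) (u : V) :
    ∃ t, u ∈ bag t ∧ ∀ z, u ∈ bag z → des T z t := by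
  have hne : {x : ι | u ∈ bag x}.Nonempty := by
    obtain ⟨⟨t0, ht0⟩⟩ := (hd.1 u).nonempty
    exact ⟨t0, ht0⟩
  obtain ⟨t, htmem, htmin⟩ := Set.exists_min_image _ (depth T) (Set.toFinite _) hne
  refine ⟨t, htmem, fun z hz => ?_⟩
  obtain ⟨w⟩ := (hd.1 u).preconnected ⟨z, hz⟩ ⟨t, htmem⟩
  exact walk_des T bag t htmin w rfl

variable (hd : IsTreeDecomp G T bag)
include hd

noncomputable def top (u : V) : ι := (exists_top T G bag hd u).choose

theorem top_mem (u : V) : u ∈ bag (top T G bag hd u) := (exists_top T G bag hd u).choose_spec.1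

theorem des_top {u : V} {z : ι} (hz : u ∈ bag z) : des T z (top T G bag hd u) :=
  (exists_top T G bag hd u).choose_spec.2 z hz

theorem bag_convex {u : V} {a b c : ι} (ha : u ∈ bag a) (hab : des T a b) (hbc : des T b c)
    (hc : u ∈ bag c) : u ∈ bag b := by
  by_cases hcb : des T c b
  · have : b = c := des_antisymm T hbc hcb
    exact this ▸ hc
  · obtain ⟨w⟩ := (hd.1 u).preconnected ⟨a, ha⟩ ⟨c, hc⟩
    have hw : b ∈ (w.map (SimpleGraph.Embedding.induce _).toHom).support :=
      walk_through T (w.map _) hab hcb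
    rw [SimpleGraph.Walk.support_map] at hw
    obtain ⟨z, _, hz2⟩ := List.mem_map.mp hw
    exact hz2 ▸ z.2

theorem nbrs_sub {u w : V} {x y : ι} (htop : des T (top T G bag hd u) y)
    (hp : T.parent y = x) (hw : w ∈ bag x) (hadj : G.Adj u w) : w ∈ bag y := by
  obtain ⟨c, hcu, hcw⟩ := hd.2 u w hadj
  have h1 : des T c y := des_trans T (des_top T G bag hd hcu) htop
  exact bag_convex T G bag hd hcw h1 ⟨1, hp⟩ hw

theorem no_cross {u v : V} {x y y' : ι} (hy : T.parent y = x) (hy' : T.parent y' = x)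
    (hyx : y ≠ x) (hy'x : y' ≠ x) (hne : y ≠ y')
    (hu : des T (top T G bag hd u) y) (hv : des T (top T G bag hd v) y') : ¬ G.Adj u v := by
  intro hadj
  obtain ⟨c, hcu, hcv⟩ := hd.2 u v hadj
  have h1 : des T c y := des_trans T (des_top T G bag hd hcu) hu
  have h2 : des T c (top T G bag hd v) := des_top T G bag hd hcv
  rcases des_total T h1 h2 with h3 | h3
  · exact children_not_des T hy hy' hyx hy'x hne (des_trans T h3 hv)
  · rcases des_total T h3 hv with h4 | h4
    · exact children_not_des T hy hy' hyx hy'x hne h4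
    · exact children_not_des T hy' hy hy'x hyx (Ne.symm hne) h4

end TW13

namespace TW13

attribute [local instance 0] Classical.propDecidable

/-! ### CWExpr lemmas -/

open CWExpr in
theorem graph_adj {k} (e : CWExpr k) (a b) :
    e.graph.Adj a b ↔ a ≠ b ∧ (e.adjRel a b ∨ e.adjRel b a) := by
  simp [CWExpr.graph, SimpleGraph.fromRel_adj]

open CWExpr in
theorem graph_recolor {k} (f : Fin k → Fin k) (e : CWExpr k) : (recolor f e).graph = e.graph := rfl

open CWExpr in
theorem join_adj_same {k} (S) (m) (es : Fin m → CWExpr k) (i) (a b : (es i).vertices) :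
    (join S m es).graph.Adj ⟨i,a⟩ ⟨i,b⟩ ↔ (es i).graph.Adj a b := by
  erw [graph_adj, graph_adj]
  have h1 : (⟨i,a⟩ : Σ j, (es j).vertices) ≠ ⟨i,b⟩ ↔ a ≠ b := by simp
  have h2 : ∀ (u v : (es i).vertices), CWExpr.adjRel (join S m es) ⟨i,u⟩ ⟨i,v⟩ ↔ (es i).adjRel u v := by
    intro u v
    show (∃ h : i = i, (es i).adjRel (h ▸ u) v) ∨ (i ≠ i ∧ _) ↔ _
    constructor
    · rintro (⟨h, hr⟩ | ⟨h, _⟩)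
      · exact hr
      · exact absurd rfl h
    · intro h; exact Or.inl ⟨rfl, h⟩
  erw [h1, h2, h2]

open CWExpr in
theorem join_adj_ne {k} (S) (m) (es : Fin m → CWExpr k) {i j} (hij : i ≠ j) (a b) :
    (join S m es).graph.Adj ⟨i,a⟩ ⟨j,b⟩ ↔ s((es i).color a, (es j).color b) ∈ S := by
  erw [graph_adj]
  constructor
  · rintro ⟨-, (⟨h,-⟩|⟨-,hm⟩) | (⟨h,-⟩|⟨-,hm⟩)⟩
    · exact absurd h hij
    · exact hm
    · exact absurd h.symm hij
    · rwa [Sym2.eq_swap]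
  · intro hm
    exact ⟨fun h => hij (congrArg Sigma.fst h), Or.inl (Or.inr ⟨hij, hm⟩)⟩

open CWExpr in
theorem single_not_adj {k} (c : Fin k) (a b) : ¬ (single c).graph.Adj a b := by
  rw [graph_adj]; rintro ⟨h, (h'|h')⟩ <;> exact h'

/-! ### Colors -/

def fBound (k : ℕ) : ℕ := 2 ^ (k + 1) + (k + 1)

abbrev CT (k : ℕ) : Type := Finset (Fin (k+1)) ⊕ Fin (k+1)

noncomputable def ec (k : ℕ) : CT k ≃ Fin (fBound k) :=
  Fintype.equivFinOfCardEq (by simp [CT, fBound])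

noncomputable def cOld {k : ℕ} (s : Finset (Fin (k+1))) : Fin (fBound k) := ec k (.inl s)

noncomputable def cNew {k : ℕ} (i : Fin (k+1)) : Fin (fBound k) := ec k (.inr i)

theorem cOld_inj {k} {s s' : Finset (Fin (k+1))} (h : cOld s = cOld s') : s = s' := by
  have := (ec k).injective h
  simpa using this

theorem cNew_inj {k} {i i' : Fin (k+1)} (h : cNew i = cNew i') : i = i' := by
  have := (ec k).injective h
  simpa using this

theorem cOld_ne_cNew {k} (s : Finset (Fin (k+1))) (i : Fin (k+1)) : cOld s ≠ cNew i := by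
  intro h
  have := (ec k).injective h
  simp at this

variable {ι V : Type} [Fintype ι] [Fintype V] (T : ParentTree ι) (G : SimpleGraph V)
  (bag : ι → Set V) {k : ℕ}

noncomputable def bagEmb (hb : ∀ x, (bag x).ncard ≤ k + 1) (x : ι) : ↥(bag x) ↪ Fin (k+1) :=
  Classical.choice <| Function.Embedding.nonempty_of_card_le <| by
    rw [Fintype.card_fin]
    rw [← Nat.card_eq_fintype_card, Nat.card_coe_set_eq]
    exact hb x

variable (hb : ∀ x, (bag x).ncard ≤ k + 1)

noncomputable def pos (x : ι) (v : V) : Fin (k+1) :=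
  if h : v ∈ bag x then bagEmb bag hb x ⟨v, h⟩ else 0

theorem pos_inj {x : ι} {v w : V} (hv : v ∈ bag x) (hw : w ∈ bag x)
    (h : pos bag hb x v = pos bag hb x w) : v = w := by
  rw [pos, pos, dif_pos hv, dif_pos hw] at h
  exact congrArg Subtype.val ((bagEmb bag hb x).injective h)

noncomputable def cset (x : ι) (u : V) : Finset (Fin (k+1)) :=
  {i | ∃ v, v ∈ bag x ∧ G.Adj u v ∧ pos bag hb x v = i}.toFinset

theorem mem_cset {x : ι} {u : V} {i : Fin (k+1)} :
    i ∈ cset G bag hb x u ↔ ∃ v, v ∈ bag x ∧ G.Adj u v ∧ pos bag hb x v = i := by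
  rw [cset, Set.mem_toFinset]; rfl

theorem pos_mem_cset {x : ι} {u w : V} (hw : w ∈ bag x) :
    pos bag hb x w ∈ cset G bag hb x u ↔ G.Adj u w := by
  rw [mem_cset]
  constructor
  · rintro ⟨v, hv, hadj, hp⟩
    rwa [← pos_inj bag hb hv hw hp]
  · intro h; exact ⟨w, hw, h, rfl⟩

noncomputable def transC (y x : ι) (c : Fin (fBound k)) : Fin (fBound k) :=
  match (ec k).symm c with
  | .inl s => cOld ({i | ∃ v, v ∈ bag x ∧ v ∈ bag y ∧ pos bag hb y v ∈ s ∧ pos bag hb x v = i}.toFinset)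
  | .inr _ => c

theorem transC_cset {x y : ι} (u : V)
    (hN : ∀ w, w ∈ bag x → G.Adj u w → w ∈ bag y) :
    transC bag hb y x (cOld (cset G bag hb y u)) = cOld (cset G bag hb x u) := by
  rw [transC, cOld, Equiv.symm_apply_apply]
  show cOld _ = cOld _
  congr 1
  ext i
  rw [Set.mem_toFinset, mem_cset]
  constructor
  · rintro ⟨v, hvx, hvy, hmem, hp⟩
    rw [pos_mem_cset G bag hb hvy] at hmem
    exact ⟨v, hvx, hmem, hp⟩
  · rintro ⟨v, hvx, hadj, hp⟩
    have hvy := hN v hvx hadj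
    exact ⟨v, hvx, hvy, (pos_mem_cset G bag hb hvy).mpr hadj, hp⟩

end TW13

namespace TW13

attribute [local instance 0] Classical.propDecidable

variable {ι V : Type} [Fintype ι] [Fintype V] (T : ParentTree ι) (G : SimpleGraph V)
  (bag : ι → Set V) {k : ℕ} (hd : IsTreeDecomp G T bag) (hb : ∀ x, (bag x).ncard ≤ k + 1)

/-! ### Children and new-vertex enumerations -/

def children (x : ι) : Set ι := {y | T.parent y = x ∧ y ≠ x}

noncomputable def nch (x : ι) : ℕ := Fintype.card ↥(children T x)

noncomputable def chEquiv (x : ι) : ↥(children T x) ≃ Fin (nch T x) := Fintype.equivFin _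

noncomputable def childAt (x : ι) (i : Fin (nch T x)) : ι := ((chEquiv T x).symm i).1

theorem childAt_mem (x : ι) (i : Fin (nch T x)) : childAt T x i ∈ children T x :=
  ((chEquiv T x).symm i).2

theorem childAt_inj {x : ι} {i i' : Fin (nch T x)} (h : childAt T x i = childAt T x i') :
    i = i' := by
  have := Subtype.ext (p := fun y => y ∈ children T x) h
  exact (chEquiv T x).symm.injective this

theorem childAt_surj {x z : ι} (hz : z ∈ children T x) : ∃ i, childAt T x i = z :=
  ⟨chEquiv T x ⟨z, hz⟩, by simp [childAt]⟩

def news (x : ι) : Set V := {u | top T G bag hd u = x}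

noncomputable def np (x : ι) : ℕ := Fintype.card ↥(news T G bag hd x)

noncomputable def newEquiv (x : ι) : ↥(news T G bag hd x) ≃ Fin (np T G bag hd x) :=
  Fintype.equivFin _

noncomputable def newAt (x : ι) (j : Fin (np T G bag hd x)) : V :=
  ((newEquiv T G bag hd x).symm j).1

theorem newAt_mem (x : ι) (j) : newAt T G bag hd x j ∈ news T G bag hd x :=
  ((newEquiv T G bag hd x).symm j).2

theorem newAt_inj {x : ι} {j j' : Fin (np T G bag hd x)}
    (h : newAt T G bag hd x j = newAt T G bag hd x j') : j = j' := by
  have := Subtype.ext (p := fun u => u ∈ news T G bag hd x) h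
  exact (newEquiv T G bag hd x).symm.injective this

theorem newAt_surj {x : ι} {v : V} (hv : v ∈ news T G bag hd x) :
    ∃ j, newAt T G bag hd x j = v :=
  ⟨newEquiv T G bag hd x ⟨v, hv⟩, by simp [newAt]⟩

theorem news_top {x : ι} {u : V} (hu : u ∈ news T G bag hd x) : top T G bag hd u = x := hu

theorem news_bag {x : ι} {u : V} (hu : u ∈ news T G bag hd x) : u ∈ bag x :=
  news_top T G bag hd hu ▸ top_mem T G bag hd u

/-! ### Join data and relabeling -/

noncomputable def Scross (x : ι) : Set (Sym2 (Fin (fBound k))) :=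
  {e | ∃ u s, u ∈ news T G bag hd x ∧ pos bag hb x u ∈ s ∧
    e = s(cNew (pos bag hb x u), cOld s)}

noncomputable def Snew (x : ι) : Set (Sym2 (Fin (fBound k))) :=
  {e | ∃ u u', u ∈ news T G bag hd x ∧ u' ∈ news T G bag hd x ∧ G.Adj u u' ∧
    e = s(cNew (pos bag hb x u), cNew (pos bag hb x u'))}

theorem mem_S_old_new {x : ι} (su : Finset (Fin (k+1))) {w : V}
    (hw : w ∈ news T G bag hd x) :
    s(cOld su, cNew (pos bag hb x w)) ∈ Scross T G bag hd hb x ∪ Snew T G bag hd hb x ↔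
      pos bag hb x w ∈ su := by
  constructor
  · rintro (⟨u', s', hu', hmem, heq⟩ | ⟨u', u'', _, _, _, heq⟩)
    · rw [Sym2.eq_iff] at heq
      rcases heq with ⟨h1, _⟩ | ⟨h1, h2⟩
      · exact absurd h1 (cOld_ne_cNew _ _)
      · have hs : su = s' := cOld_inj h1
        have hww : u' = w :=
          pos_inj bag hb (news_bag T G bag hd hu') (news_bag T G bag hd hw) (cNew_inj h2).symm
        rw [hs, ← hww]
        exact hmem
    · rw [Sym2.eq_iff] at heq
      rcases heq with ⟨h1, _⟩ | ⟨h1, _⟩ <;> exact absurd h1 (cOld_ne_cNew _ _)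
  · intro hmem
    exact Or.inl ⟨w, su, hw, hmem, by rw [Sym2.eq_swap]⟩

theorem mem_S_new_new {x : ι} {w w' : V} (hw : w ∈ news T G bag hd x)
    (hw' : w' ∈ news T G bag hd x) :
    s(cNew (pos bag hb x w), cNew (pos bag hb x w')) ∈
      Scross T G bag hd hb x ∪ Snew T G bag hd hb x ↔ G.Adj w w' := by
  constructor
  · rintro (⟨u', s', _, _, heq⟩ | ⟨u', u'', hu', hu'', hadj, heq⟩)
    · rw [Sym2.eq_iff] at heq
      rcases heq with ⟨_, h2⟩ | ⟨h2, _⟩ <;> exact absurd h2.symm (cOld_ne_cNew _ _)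
    · rw [Sym2.eq_iff] at heq
      rcases heq with ⟨h1, h2⟩ | ⟨h1, h2⟩
      · rw [pos_inj bag hb (news_bag T G bag hd hw) (news_bag T G bag hd hu') (cNew_inj h1),
          pos_inj bag hb (news_bag T G bag hd hw') (news_bag T G bag hd hu'') (cNew_inj h2)]
        exact hadj
      · rw [pos_inj bag hb (news_bag T G bag hd hw) (news_bag T G bag hd hu'') (cNew_inj h1),
          pos_inj bag hb (news_bag T G bag hd hw') (news_bag T G bag hd hu') (cNew_inj h2)]
        exact hadj.symm
  · intro hadj
    exact Or.inr ⟨w, w', hw, hw', hadj, rfl⟩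

noncomputable def reLabel (x : ι) (c : Fin (fBound k)) : Fin (fBound k) :=
  if h : ∃ u, u ∈ news T G bag hd x ∧ cNew (pos bag hb x u) = c then
    cOld (cset G bag hb x h.choose)
  else c

theorem reLabel_cOld (x : ι) (s : Finset (Fin (k+1))) :
    reLabel T G bag hd hb x (cOld s) = cOld s := by
  rw [reLabel, dif_neg]
  rintro ⟨u, -, heq⟩
  exact cOld_ne_cNew s (pos bag hb x u) heq.symm

theorem reLabel_cNew {x : ι} {u : V} (hu : u ∈ news T G bag hd x) :
    reLabel T G bag hd hb x (cNew (pos bag hb x u)) = cOld (cset G bag hb x u) := by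
  have hex : ∃ u', u' ∈ news T G bag hd x ∧ cNew (pos bag hb x u') = cNew (pos bag hb x u) :=
    ⟨u, hu, rfl⟩
  rw [reLabel, dif_pos hex]
  have hspec := hex.choose_spec
  have : hex.choose = u :=
    pos_inj bag hb (news_bag T G bag hd hspec.1) (news_bag T G bag hd hu) (cNew_inj hspec.2)
  rw [this]

/-! ### The expression built at a node -/

noncomputable def Aexpr (x : ι)
    (ce : Fin (nch T x) → (e : CWExpr (fBound k)) × (e.vertices → V)) : CWExpr (fBound k) :=
  .join ∅ (nch T x) (fun i => .recolor (transC bag hb (childAt T x i) x) (ce i).1)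

noncomputable def famF (x : ι)
    (ce : Fin (nch T x) → (e : CWExpr (fBound k)) × (e.vertices → V)) :
    Fin (np T G bag hd x + 1) → CWExpr (fBound k) :=
  fun i => match i with
  | ⟨0, _⟩ => Aexpr T bag hb x ce
  | ⟨j+1, hj⟩ => .single (cNew (pos bag hb x (newAt T G bag hd x ⟨j, Nat.lt_of_succ_lt_succ hj⟩)))

noncomputable def Eexpr (x : ι)
    (ce : Fin (nch T x) → (e : CWExpr (fBound k)) × (e.vertices → V)) : CWExpr (fBound k) :=
  .recolor (reLabel T G bag hd hb x)
    (.join (Scross T G bag hd hb x ∪ Snew T G bag hd hb x) _ (famF T G bag hd hb x ce))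

noncomputable def psiF (x : ι)
    (ce : Fin (nch T x) → (e : CWExpr (fBound k)) × (e.vertices → V)) :
    (Eexpr T G bag hd hb x ce).vertices → V :=
  fun a => match a with
  | ⟨⟨0, _⟩, b⟩ => (ce b.1).2 b.2
  | ⟨⟨j+1, hj⟩, _⟩ => newAt T G bag hd x ⟨j, Nat.lt_of_succ_lt_succ hj⟩

noncomputable def build : ℕ → ι → (e : CWExpr (fBound k)) × (e.vertices → V)
  | 0, _ => ⟨.join ∅ 0 (fun i => i.elim0), fun a => a.1.elim0⟩
  | (n+1), x =>
      ⟨Eexpr T G bag hd hb x (fun i => build n (childAt T x i)),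
       psiF T G bag hd hb x (fun i => build n (childAt T x i))⟩

def Good (x : ι) (pr : (e : CWExpr (fBound k)) × (e.vertices → V)) : Prop :=
  Function.Injective pr.2 ∧
  Set.range pr.2 = {v | des T (top T G bag hd v) x} ∧
  (∀ a, pr.1.color a = cOld (cset G bag hb x (pr.2 a))) ∧
  (∀ a b, pr.1.graph.Adj a b ↔ G.Adj (pr.2 a) (pr.2 b))

end TW13

namespace TW13

attribute [local instance 0] Classical.propDecidable

variable {ι V : Type} [Fintype ι] [Fintype V] (T : ParentTree ι) (G : SimpleGraph V)
  (bag : ι → Set V) {k : ℕ} (hd : IsTreeDecomp G T bag) (hb : ∀ x, (bag x).ncard ≤ k + 1)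

theorem step_good (x : ι) (ce : Fin (nch T x) → (e : CWExpr (fBound k)) × (e.vertices → V))
    (IH : ∀ i, Good T G bag hd hb (childAt T x i) (ce i)) :
    Good T G bag hd hb x ⟨Eexpr T G bag hd hb x ce, psiF T G bag hd hb x ce⟩ := by
  have hch : ∀ i, T.parent (childAt T x i) = x ∧ childAt T x i ≠ x := fun i => childAt_mem T x i
  have hrng : ∀ (i) (bc : ((ce i).1).vertices),
      des T (top T G bag hd ((ce i).2 bc)) (childAt T x i) := by
    intro i bc
    have hmem : (ce i).2 bc ∈ Set.range (ce i).2 := ⟨bc, rfl⟩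
    rw [(IH i).2.1] at hmem
    exact hmem
  have hAcol : ∀ (i) (bc : ((ce i).1).vertices),
      (Aexpr T bag hb x ce).color ⟨i, bc⟩ = cOld (cset G bag hb x ((ce i).2 bc)) := by
    intro i bc
    have h1 : (Aexpr T bag hb x ce).color ⟨i, bc⟩
        = transC bag hb (childAt T x i) x ((ce i).1.color bc) := rfl
    rw [h1, (IH i).2.2.1 bc]
    exact transC_cset G bag hb ((ce i).2 bc)
      (fun w hw hadj => nbrs_sub T G bag hd (hrng i bc) (hch i).1 hw hadj)
  refine ⟨?_, ?_, ?_, ?_⟩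
  · -- injectivity
    rintro ⟨⟨iv, hiv⟩, va⟩ ⟨⟨iw, hiw⟩, vb⟩ heq
    cases iv with
    | zero =>
      obtain ⟨i, bc⟩ := va
      cases iw with
      | zero =>
        obtain ⟨i', bc'⟩ := vb
        have heq' : (ce i).2 bc = (ce i').2 bc' := heq
        by_cases hii : i = i'
        · subst hii
          have hbc : bc = bc' := (IH i).1 heq'
          subst hbc; rfl
        · exfalso
          have h1 := hrng i bc
          have h2 := hrng i' bc'
          rw [heq'] at h1
          have hne : childAt T x i ≠ childAt T x i' := fun hh => hii (childAt_inj T hh)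
          rcases des_total T h1 h2 with h3 | h3
          · exact children_not_des T (hch i).1 (hch i').1 (hch i).2 (hch i').2 hne h3
          · exact children_not_des T (hch i').1 (hch i).1 (hch i').2 (hch i).2 hne.symm h3
      | succ j =>
        exfalso
        have heq' : (ce i).2 bc
            = newAt T G bag hd x ⟨j, Nat.lt_of_succ_lt_succ hiw⟩ := heq
        have h1 := hrng i bc
        rw [heq', news_top T G bag hd (newAt_mem T G bag hd x _)] at h1
        exact (hch i).2 (des_antisymm T ⟨1, (hch i).1⟩ h1)
    | succ j =>
      cases iw with
      | zero =>
        exfalso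
        obtain ⟨i', bc'⟩ := vb
        have heq' : (ce i').2 bc'
            = newAt T G bag hd x ⟨j, Nat.lt_of_succ_lt_succ hiv⟩ := heq.symm
        have h1 := hrng i' bc'
        rw [heq', news_top T G bag hd (newAt_mem T G bag hd x _)] at h1
        exact (hch i').2 (des_antisymm T ⟨1, (hch i').1⟩ h1)
      | succ j' =>
        have heq' : newAt T G bag hd x ⟨j, Nat.lt_of_succ_lt_succ hiv⟩
            = newAt T G bag hd x ⟨j', Nat.lt_of_succ_lt_succ hiw⟩ := heq
        have hjj : j = j' := by
          have := newAt_inj T G bag hd heq'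
          simpa using this
        subst hjj
        cases va; cases vb; rfl
  · -- range
    ext v
    simp only [Set.mem_range, Set.mem_setOf_eq]
    constructor
    · rintro ⟨⟨⟨iv, hiv⟩, va⟩, rfl⟩
      cases iv with
      | zero =>
        obtain ⟨i, bc⟩ := va
        show des T (top T G bag hd ((ce i).2 bc)) x
        exact des_trans T (hrng i bc) ⟨1, (hch i).1⟩
      | succ j =>
        show des T (top T G bag hd (newAt T G bag hd x ⟨j, Nat.lt_of_succ_lt_succ hiv⟩)) x
        rw [news_top T G bag hd (newAt_mem T G bag hd x _)]
        exact des_refl T x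
    · intro hdes
      have hex : ∃ n, T.parent^[n] (top T G bag hd v) = x := hdes
      rcases hn0 : Nat.find hex with _ | m
      · have hvx : top T G bag hd v = x := by
          have := Nat.find_spec hex; rwa [hn0] at this
        obtain ⟨j, hj⟩ := newAt_surj T G bag hd (hvx : v ∈ news T G bag hd x)
        refine ⟨⟨⟨j.1 + 1, Nat.succ_lt_succ j.2⟩, ()⟩, ?_⟩
        show newAt T G bag hd x ⟨j.1, Nat.lt_of_succ_lt_succ (Nat.succ_lt_succ j.2)⟩ = v
        exact (congrArg (newAt T G bag hd x) (Fin.ext rfl)).trans hj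
      · have hspec := Nat.find_spec hex
        rw [hn0] at hspec
        have hz1 : T.parent (T.parent^[m] (top T G bag hd v)) = x :=
          (Function.iterate_succ_apply' T.parent m _).symm.trans hspec
        have hz2 : T.parent^[m] (top T G bag hd v) ≠ x :=
          Nat.find_min hex (hn0 ▸ m.lt_succ_self)
        obtain ⟨i, hi⟩ := childAt_surj T (⟨hz1, hz2⟩ :
          T.parent^[m] (top T G bag hd v) ∈ children T x)
        have hdes2 : des T (top T G bag hd v) (childAt T x i) := ⟨m, hi.symm⟩
        have hvmem : v ∈ Set.range (ce i).2 := by rw [(IH i).2.1]; exact hdes2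
        obtain ⟨bc, hbc⟩ := hvmem
        exact ⟨⟨⟨0, Nat.succ_pos _⟩, ⟨i, bc⟩⟩, hbc⟩
  · -- colors
    rintro ⟨⟨iv, hiv⟩, va⟩
    cases iv with
    | zero =>
      obtain ⟨i, bc⟩ := va
      show reLabel T G bag hd hb x ((Aexpr T bag hb x ce).color ⟨i, bc⟩)
        = cOld (cset G bag hb x ((ce i).2 bc))
      rw [hAcol i bc, reLabel_cOld]
    | succ j =>
      show reLabel T G bag hd hb x
          (cNew (pos bag hb x (newAt T G bag hd x ⟨j, Nat.lt_of_succ_lt_succ hiv⟩)))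
        = cOld (cset G bag hb x (newAt T G bag hd x ⟨j, Nat.lt_of_succ_lt_succ hiv⟩))
      exact reLabel_cNew T G bag hd hb (newAt_mem T G bag hd x _)
  · -- adjacency
    rintro ⟨⟨iv, hiv⟩, va⟩ ⟨⟨iw, hiw⟩, vb⟩
    cases iv with
    | zero =>
      obtain ⟨i, bc⟩ := va
      cases iw with
      | zero =>
        obtain ⟨i', bc'⟩ := vb
        have houter : (Eexpr T G bag hd hb x ce).graph.Adj ⟨⟨0, hiv⟩, ⟨i, bc⟩⟩ ⟨⟨0, hiw⟩, ⟨i', bc'⟩⟩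
            ↔ (Aexpr T bag hb x ce).graph.Adj ⟨i, bc⟩ ⟨i', bc'⟩ :=
          join_adj_same _ _ (famF T G bag hd hb x ce) ⟨0, hiv⟩ ⟨i, bc⟩ ⟨i', bc'⟩
        by_cases hii : i = i'
        · subst hii
          have hinner : (Aexpr T bag hb x ce).graph.Adj ⟨i, bc⟩ ⟨i, bc'⟩
              ↔ ((ce i).1).graph.Adj bc bc' :=
            join_adj_same ∅ (nch T x)
              (fun i => CWExpr.recolor (transC bag hb (childAt T x i) x) (ce i).1) i bc bc'
          exact houter.trans (hinner.trans ((IH i).2.2.2 bc bc'))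
        · have hinner : (Aexpr T bag hb x ce).graph.Adj ⟨i, bc⟩ ⟨i', bc'⟩
              ↔ s((CWExpr.recolor (transC bag hb (childAt T x i) x) (ce i).1).color bc,
                  (CWExpr.recolor (transC bag hb (childAt T x i') x) (ce i').1).color bc')
                ∈ (∅ : Set (Sym2 (Fin (fBound k)))) :=
            join_adj_ne ∅ (nch T x)
              (fun i => CWExpr.recolor (transC bag hb (childAt T x i) x) (ce i).1) hii bc bc'
          refine houter.trans (hinner.trans (iff_of_false (Set.notMem_empty _) ?_))
          exact no_cross T G bag hd (hch i).1 (hch i').1 (hch i).2 (hch i').2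
            (fun hh => hii (childAt_inj T hh)) (hrng i bc) (hrng i' bc')
      | succ j =>
        have hne : (⟨0, hiv⟩ : Fin (np T G bag hd x + 1)) ≠ ⟨j + 1, hiw⟩ := by
          intro hh; rw [Fin.mk.injEq] at hh; omega
        have houter : (Eexpr T G bag hd hb x ce).graph.Adj ⟨⟨0, hiv⟩, ⟨i, bc⟩⟩ ⟨⟨j+1, hiw⟩, vb⟩
            ↔ s((Aexpr T bag hb x ce).color ⟨i, bc⟩,
                cNew (pos bag hb x (newAt T G bag hd x ⟨j, Nat.lt_of_succ_lt_succ hiw⟩)))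
              ∈ Scross T G bag hd hb x ∪ Snew T G bag hd hb x :=
          join_adj_ne _ _ (famF T G bag hd hb x ce) hne ⟨i, bc⟩ vb
        rw [hAcol i bc] at houter
        exact houter.trans ((mem_S_old_new T G bag hd hb _ (newAt_mem T G bag hd x _)).trans
          (pos_mem_cset G bag hb (news_bag T G bag hd (newAt_mem T G bag hd x _))))
    | succ j =>
      cases iw with
      | zero =>
        obtain ⟨i', bc'⟩ := vb
        have hne : (⟨j + 1, hiv⟩ : Fin (np T G bag hd x + 1)) ≠ ⟨0, hiw⟩ := by
          intro hh; rw [Fin.mk.injEq] at hh; omega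
        have houter : (Eexpr T G bag hd hb x ce).graph.Adj ⟨⟨j+1, hiv⟩, va⟩ ⟨⟨0, hiw⟩, ⟨i', bc'⟩⟩
            ↔ s(cNew (pos bag hb x (newAt T G bag hd x ⟨j, Nat.lt_of_succ_lt_succ hiv⟩)),
                (Aexpr T bag hb x ce).color ⟨i', bc'⟩)
              ∈ Scross T G bag hd hb x ∪ Snew T G bag hd hb x :=
          join_adj_ne _ _ (famF T G bag hd hb x ce) hne va ⟨i', bc'⟩
        rw [hAcol i' bc', Sym2.eq_swap] at houter
        refine houter.trans (((mem_S_old_new T G bag hd hb _ (newAt_mem T G bag hd x _)).trans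
          ((pos_mem_cset G bag hb (news_bag T G bag hd (newAt_mem T G bag hd x _))).trans
            (G.adj_comm _ _))))
      | succ j' =>
        by_cases hjj : j = j'
        · subst hjj
          have houter : (Eexpr T G bag hd hb x ce).graph.Adj ⟨⟨j+1, hiv⟩, va⟩ ⟨⟨j+1, hiw⟩, vb⟩
              ↔ (CWExpr.single (cNew (pos bag hb x
                  (newAt T G bag hd x ⟨j, Nat.lt_of_succ_lt_succ hiv⟩)))).graph.Adj va vb :=
            join_adj_same _ _ (famF T G bag hd hb x ce) ⟨j+1, hiv⟩ va vb
          refine iff_of_false (fun hh => single_not_adj _ va vb (houter.mp hh)) ?_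
          exact G.irrefl
        · have hne : (⟨j + 1, hiv⟩ : Fin (np T G bag hd x + 1)) ≠ ⟨j' + 1, hiw⟩ := by
            intro hh; rw [Fin.mk.injEq] at hh; omega
          have houter : (Eexpr T G bag hd hb x ce).graph.Adj ⟨⟨j+1, hiv⟩, va⟩ ⟨⟨j'+1, hiw⟩, vb⟩
              ↔ s(cNew (pos bag hb x (newAt T G bag hd x ⟨j, Nat.lt_of_succ_lt_succ hiv⟩)),
                  cNew (pos bag hb x (newAt T G bag hd x ⟨j', Nat.lt_of_succ_lt_succ hiw⟩)))
                ∈ Scross T G bag hd hb x ∪ Snew T G bag hd hb x :=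
            join_adj_ne _ _ (famF T G bag hd hb x ce) hne va vb
          exact houter.trans (mem_S_new_new T G bag hd hb
            (newAt_mem T G bag hd x _) (newAt_mem T G bag hd x _))

end TW13

namespace TW13

attribute [local instance 0] Classical.propDecidable

variable {ι V : Type} [Fintype ι] [Fintype V] (T : ParentTree ι) (G : SimpleGraph V)
  (bag : ι → Set V) {k : ℕ} (hd : IsTreeDecomp G T bag) (hb : ∀ x, (bag x).ncard ≤ k + 1)

theorem build_good : ∀ (n : ℕ) (x : ι), (∀ z, des T z x → depth T z ≤ depth T x + n) →
    Good T G bag hd hb x (build T G bag hd hb (n+1) x) := by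
  intro n
  induction n with
  | zero =>
    intro x hx
    exact step_good T G bag hd hb x (fun i => build T G bag hd hb 0 (childAt T x i))
      (fun i => by
        exfalso
        have hmem := childAt_mem T x i
        have h1 := depth_child T hmem.1 hmem.2
        have h2 := hx (childAt T x i) ⟨1, hmem.1⟩
        omega)
  | succ n ih =>
    intro x hx
    exact step_good T G bag hd hb x (fun i => build T G bag hd hb (n+1) (childAt T x i))
      (fun i => by
        refine ih (childAt T x i) (fun z hz => ?_)
        have h1 := depth_child T (childAt_mem T x i).1 (childAt_mem T x i).2
        have h2 := hx z (des_trans T hz ⟨1, (childAt_mem T x i).1⟩)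
        omega)

theorem tw_implies_cw (htw : TreewidthLE G k) : CliquewidthLE G (fBound k) := by
  obtain ⟨ι, hι, T, bag, hdc, hbag⟩ := htw
  haveI := hι
  set N := Finset.univ.sup (fun z : ι => depth T z) with hN
  have hgood := build_good T G bag hdc hbag N T.root (fun z _ => by
    have : depth T z ≤ N := Finset.le_sup (Finset.mem_univ z)
    rw [depth_root]
    omega)
  obtain ⟨hinj, hrng, hcol, hadj⟩ := hgood
  have hsurj : Function.Surjective (build T G bag hdc hbag (N+1) T.root).2 := by
    intro v
    have hmem : v ∈ Set.range (build T G bag hdc hbag (N+1) T.root).2 := by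
      rw [hrng]
      exact T.reaches_root (top T G bag hdc v)
    exact hmem
  refine ⟨(build T G bag hdc hbag (N+1) T.root).1, ⟨?_⟩⟩
  let eqv := Equiv.ofBijective _ ⟨hinj, hsurj⟩
  refine ⟨eqv.symm, ?_⟩
  intro a b
  rw [hadj]
  have h1 : ∀ c, (build T G bag hdc hbag (N+1) T.root).2 (eqv.symm c) = c :=
    fun c => eqv.apply_symm_apply c
  rw [h1, h1]

end TW13

theorem stmt13 :
    ∃ f : ℕ → ℕ, ∀ (V : Type) (_ : Fintype V) (G : SimpleGraph V) (k : ℕ),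
      TreewidthLE G k → CliquewidthLE G (f k) := by
  refine ⟨TW13.fBound, fun V hV G k htw => ?_⟩
  haveI := hV
  exact TW13.tw_implies_cw G htw
end

section
/- There exist a finite relational signature σ and a first-order sentence φ over σ ∪ {<} that is order-invariant on finite σ-structures, such that the class of finite σ-structures defined by φ is not defined by any first-order sentence over σ; that is, order-invariant first-order logic is strictly more expressive than first-order logic on finite structures. -/
open FirstOrder FirstOrder.Language

/-- The language with a single binary relation symbol `<` (and nothing else). -/
def ordL : FirstOrder.Language :=
  ⟨fun _ => Empty, fun n => match n with
    | 2 => Unit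
    | _ => Empty⟩

/-- The expansion `σ ∪ {<}` of a signature `σ` by a new binary relation symbol. -/
def addOrder (σ : FirstOrder.Language) : FirstOrder.Language := σ.sum ordL

/-- The `(σ ∪ {<})`-structure obtained from a `σ`-structure by interpreting `<` as the
binary relation `r`. -/
def addOrderStruct (σ : FirstOrder.Language) (A : Type*) (SA : σ.Structure A)
    (r : A → A → Prop) : (addOrder σ).Structure A where
  funMap := fun {n} f =>
    match f with
    | Sum.inl g => @Structure.funMap σ A SA n g
    | Sum.inr g => g.elim
  RelMap := fun {n} R v =>
    match n, R, v with
    | n, Sum.inl S, v => @Structure.RelMap σ A SA n S v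
    | 2, Sum.inr _, v => r (v 0) (v 1)
    | 0, Sum.inr g, _ => g.elim
    | 1, Sum.inr g, _ => g.elim
    | (_ + 3), Sum.inr g, _ => g.elim

universe u v

def pordL : FirstOrder.Language :=
  ⟨fun _ => PEmpty.{u+1}, fun n => match n with
    | 2 => PUnit.{v+1}
    | _ => PEmpty.{v+1}⟩

instance : IsRelational pordL := fun _ => ⟨fun f => PEmpty.elim f⟩

instance : Subsingleton (Σ n, pordL.Relations n) := by
  constructor
  rintro ⟨n, R⟩ ⟨m, S⟩
  match n, R, m, S with
  | 2, PUnit.unit, 2, PUnit.unit => rfl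
  | 0, R, _, _ => exact R.elim
  | 1, R, _, _ => exact R.elim
  | (k+3), R, _, _ => exact R.elim
  | 2, PUnit.unit, 0, S => exact S.elim
  | 2, PUnit.unit, 1, S => exact S.elim
  | 2, PUnit.unit, (k+3), S => exact S.elim

instance : Finite (Σ n, pordL.Relations n) := Finite.of_subsingleton

abbrev L : FirstOrder.Language := addOrder pordL
def εR : L.Relations 2 := Sum.inl PUnit.unit
def ltR : L.Relations 2 := Sum.inr ()
def memF {l : ℕ} (i j : Fin l) : L.BoundedFormula Empty l := εR.boundedFormula₂ (&i) (&j)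
def ltF {l : ℕ} (i j : Fin l) : L.BoundedFormula Empty l := ltR.boundedFormula₂ (&i) (&j)

def eS (A : Type) (SA : pordL.Structure A) (x y : A) : Prop :=
  @Structure.RelMap pordL A SA 2 PUnit.unit ![x,y]

section
variable (A : Type) (SA : pordL.Structure A) (r : A → A → Prop)

@[simp] lemma realize_memF {l} (i j : Fin l) (v : Empty → A) (xs : Fin l → A) :
    @BoundedFormula.Realize L A (addOrderStruct pordL A SA r) _ _ (memF i j) v xs ↔ eS A SA (xs i) (xs j) := by
  have h : (fun k => @Term.realize L A (addOrderStruct pordL A SA r) _ (Sum.elim v xs)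
      (![(Term.var ∘ Sum.inr) i, (Term.var ∘ Sum.inr) j] k)) = ![xs i, xs j] := by
    funext k; fin_cases k <;> rfl
  simp only [memF, εR, Relations.boundedFormula₂, Relations.boundedFormula, BoundedFormula.Realize, h]
  exact Iff.rfl

@[simp] lemma realize_ltF {l} (i j : Fin l) (v : Empty → A) (xs : Fin l → A) :
    @BoundedFormula.Realize L A (addOrderStruct pordL A SA r) _ _ (ltF i j) v xs ↔ r (xs i) (xs j) := by
  have h : (fun k => @Term.realize L A (addOrderStruct pordL A SA r) _ (Sum.elim v xs)
      (![(Term.var ∘ Sum.inr) i, (Term.var ∘ Sum.inr) j] k)) = ![xs i, xs j] := by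
    funext k; fin_cases k <;> rfl
  simp only [ltF, ltR, Relations.boundedFormula₂, Relations.boundedFormula, BoundedFormula.Realize, h]
  exact Iff.rfl

end

/-- there is an element with no members -/
def T3S : L.Sentence := ∃' ∀' (∼ (memF 1 0))
/-- one can adjoin an atom to any element -/
def T4S : L.Sentence :=
  ∀' ∀' (memF 1 1 ⟹ ∃' ∀' (memF 3 2 ⇔ (memF 3 0 ⊔ Term.bdEqual (&3) (&1))))
def C1 : L.BoundedFormula Empty 1 :=
  ∀' ((memF 1 1 ⊓ ∀' (memF 2 2 ⟹ ∼ (ltF 2 1))) ⟹ memF 1 0)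
def C2 : L.BoundedFormula Empty 1 :=
  ∀' ∀' ((memF 1 1 ⊓ memF 2 2 ⊓ ltF 1 2 ⊓ ∀' (memF 3 3 ⟹ ∼(ltF 1 3 ⊓ ltF 3 2))) ⟹
    (memF 1 0 ⇔ ∼ (memF 2 0)))
def C3 : L.BoundedFormula Empty 1 :=
  ∀' ((memF 1 1 ⊓ ∀' (memF 2 2 ⟹ ∼ (ltF 1 2))) ⟹ ∼ (memF 1 0))
def ParS : L.Sentence := ∃' (C1 ⊓ C2 ⊓ C3)
def phi : L.Sentence := T3S ⊓ T4S ⊓ ParS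

section
variable (A : Type) (SA : pordL.Structure A)

def T3sem : Prop := ∃ z, ∀ x, ¬ eS A SA x z
def T4sem : Prop := ∀ y p, eS A SA p p → ∃ z, ∀ x, eS A SA x z ↔ (eS A SA x y ∨ x = p)
def ParSem (r : A → A → Prop) : Prop :=
  ∃ z, (∀ p, eS A SA p p → (∀ q, eS A SA q q → ¬ r q p) → eS A SA p z)
    ∧ (∀ p q, eS A SA p p → eS A SA q q → r p q →
        (∀ u, eS A SA u u → r p u → ¬ r u q) → (eS A SA p z ↔ ¬ eS A SA q z))
    ∧ (∀ p, eS A SA p p → (∀ q, eS A SA q q → ¬ r p q) → ¬ eS A SA p z)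

variable (r : A → A → Prop)

lemma realize_T3S :
    @Sentence.Realize L A (addOrderStruct pordL A SA r) T3S ↔ T3sem A SA := by
  simp [T3S, T3sem, Sentence.Realize, Formula.Realize, Fin.snoc]

lemma realize_T4S :
    @Sentence.Realize L A (addOrderStruct pordL A SA r) T4S ↔ T4sem A SA := by
  simp [T4S, T4sem, Sentence.Realize, Formula.Realize, Fin.snoc, show ((0:Fin 1):ℕ) = 0 from rfl, show ((0:Fin 2):ℕ) = 0 from rfl, show ((1:Fin 2):ℕ) = 1 from rfl, show ((0:Fin 3):ℕ) = 0 from rfl, show ((1:Fin 3):ℕ) = 1 from rfl, show ((2:Fin 3):ℕ) = 2 from rfl, show ((0:Fin 4):ℕ) = 0 from rfl, show ((1:Fin 4):ℕ) = 1 from rfl, show ((2:Fin 4):ℕ) = 2 from rfl, show ((3:Fin 4):ℕ) = 3 from rfl]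

lemma realize_ParS :
    @Sentence.Realize L A (addOrderStruct pordL A SA r) ParS ↔ ParSem A SA r := by
  simp [ParS, C1, C2, C3, ParSem, Sentence.Realize, Formula.Realize, Fin.snoc, and_assoc, show ((0:Fin 1):ℕ) = 0 from rfl, show ((0:Fin 2):ℕ) = 0 from rfl, show ((1:Fin 2):ℕ) = 1 from rfl, show ((0:Fin 3):ℕ) = 0 from rfl, show ((1:Fin 3):ℕ) = 1 from rfl, show ((2:Fin 3):ℕ) = 2 from rfl, show ((0:Fin 4):ℕ) = 0 from rfl, show ((1:Fin 4):ℕ) = 1 from rfl, show ((2:Fin 4):ℕ) = 2 from rfl, show ((3:Fin 4):ℕ) = 3 from rfl]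

end

section
variable (A : Type) [Fintype A] (SA : pordL.Structure A)

noncomputable def Pts : Finset A := by
  classical exact Finset.univ.filter (fun x => eS A SA x x)

noncomputable def nP : ℕ := (Pts A SA).card

lemma mem_Pts (x : A) : x ∈ Pts A SA ↔ eS A SA x x := by
  simp [Pts]

lemma parSem_iff_even (r : A → A → Prop) (hr : IsStrictTotalOrder A r)
    (h3 : T3sem A SA) (h4 : T4sem A SA) :
    ParSem A SA r ↔ Even (nP A SA) := by
  classical
  haveI := hr
  letI : LinearOrder A := linearOrderOfSTO r
  have hmem : ∀ x, x ∈ Pts A SA ↔ eS A SA x x := mem_Pts A SA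
  have hrank_succ : ∀ p q, p ∈ Pts A SA → q ∈ Pts A SA → r p q →
      (∀ u, eS A SA u u → r p u → ¬ r u q) →
      ((Pts A SA).filter (fun x => r x q)).card = ((Pts A SA).filter (fun x => r x p)).card + 1 := by
    intro p q hp hq hpq hbet
    have hset : (Pts A SA).filter (fun x => r x q) = insert p ((Pts A SA).filter (fun x => r x p)) := by
      ext x
      simp only [Finset.mem_filter, Finset.mem_insert]
      constructor
      · rintro ⟨hxP, hxq⟩
        rcases trichotomous_of r x p with h | h | h
        · right; exact ⟨hxP, h⟩
        · left; exact h
        · exact absurd hxq (hbet x ((hmem x).1 hxP) h)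
      · rintro (rfl | ⟨hxP, hxp⟩)
        · exact ⟨hp, hpq⟩
        · exact ⟨hxP, trans_of r hxp hpq⟩
    rw [hset, Finset.card_insert_of_notMem]
    simp only [Finset.mem_filter, not_and]
    intro _
    exact irrefl_of r p
  have hfirst : ∀ p, p ∈ Pts A SA → (∀ q, eS A SA q q → ¬ r q p) →
      ((Pts A SA).filter (fun x => r x p)).card = 0 := by
    intro p _ h
    rw [Finset.card_eq_zero, Finset.filter_eq_empty_iff]
    intro x hx
    exact h x ((hmem x).1 hx)
  have hlast : ∀ p, p ∈ Pts A SA → (∀ q, eS A SA q q → ¬ r p q) →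
      ((Pts A SA).filter (fun x => r x p)).card + 1 = (Pts A SA).card := by
    intro p hp h
    have hset : (Pts A SA).filter (fun x => r x p) = (Pts A SA).erase p := by
      ext x
      simp only [Finset.mem_filter, Finset.mem_erase]
      constructor
      · rintro ⟨hxP, hxp⟩
        exact ⟨fun h' => (irrefl_of r p (h' ▸ hxp)), hxP⟩
      · rintro ⟨hne, hxP⟩
        rcases trichotomous_of r x p with h' | h' | h'
        · exact ⟨hxP, h'⟩
        · exact absurd h' hne
        · exact absurd h' (h x ((hmem x).1 hxP))
    rw [hset, Finset.card_erase_of_mem hp, Nat.sub_add_cancel (Finset.card_pos.2 ⟨p, hp⟩)]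
  have claim : ∀ z,
      (∀ p, eS A SA p p → (∀ q, eS A SA q q → ¬ r q p) → eS A SA p z) →
      (∀ p q, eS A SA p p → eS A SA q q → r p q → (∀ u, eS A SA u u → r p u → ¬ r u q) →
        (eS A SA p z ↔ ¬ eS A SA q z)) →
      ∀ k p, p ∈ Pts A SA → ((Pts A SA).filter (fun x => r x p)).card = k →
        (eS A SA p z ↔ Even k) := by
    intro z hc1 hc2 k
    induction k using Nat.strong_induction_on with
    | _ k ih =>
      intro p hp hk
      rcases Nat.eq_zero_or_pos k with rfl | hkpos
      · have hfst : ∀ q, eS A SA q q → ¬ r q p := by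
          intro q hq hrq
          rw [Finset.card_eq_zero] at hk
          have : q ∈ (Pts A SA).filter (fun x => r x p) :=
            Finset.mem_filter.2 ⟨(hmem q).2 hq, hrq⟩
          simp [hk] at this
        simpa using hc1 p ((hmem p).1 hp) hfst
      · obtain ⟨k', rfl⟩ : ∃ k', k = k' + 1 := ⟨k - 1, (Nat.succ_pred_eq_of_pos hkpos).symm⟩
        have hFne : ((Pts A SA).filter (fun x => r x p)).Nonempty :=
          Finset.card_pos.1 (by omega)
        set F := (Pts A SA).filter (fun x => r x p) with hF
        set q := F.max' hFne with hq
        have hqF : q ∈ F := F.max'_mem hFne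
        have hqP : q ∈ Pts A SA := (Finset.mem_filter.1 hqF).1
        have hqp : r q p := (Finset.mem_filter.1 hqF).2
        have hbet : ∀ u, eS A SA u u → r q u → ¬ r u p := by
          intro u hu hqu hup
          have huF : u ∈ F := Finset.mem_filter.2 ⟨(hmem u).2 hu, hup⟩
          exact absurd hqu (not_lt.2 (F.le_max' u huF))
        have hrank : ((Pts A SA).filter (fun x => r x q)).card = k' := by
          have h' := hrank_succ q p hqP hp hqp hbet
          rw [← hF] at h'
          omega
        have hqz := hc2 q p ((hmem q).1 hqP) ((hmem p).1 hp) hqp hbet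
        have hq_even := ih k' (Nat.lt_succ_self k') q hqP hrank
        rw [Nat.even_add_one]
        tauto
  constructor
  · rintro ⟨z, hc1, hc2, hc3⟩
    rcases Finset.eq_empty_or_nonempty (Pts A SA) with hPe | hPne
    · simp [nP, hPe]
    · set pm := (Pts A SA).max' hPne with hpm
      have hpmP : pm ∈ Pts A SA := Finset.max'_mem _ _
      have hlastpm : ∀ q, eS A SA q q → ¬ r pm q := by
        intro q hq hpq
        exact absurd hpq (not_lt.2 (Finset.le_max' _ q ((hmem q).2 hq)))
      have h1 := hc3 pm ((hmem pm).1 hpmP) hlastpm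
      have h2 := claim z hc1 hc2 _ pm hpmP rfl
      have h3' := hlast pm hpmP hlastpm
      rw [h2] at h1
      have : Even (((Pts A SA).filter (fun x => r x pm)).card + 1) := by
        rwa [Nat.even_add_one]
      rw [h3'] at this
      exact this
  · intro heven
    have rep : ∀ S : Finset A, (∀ x ∈ S, eS A SA x x) → ∃ z, ∀ x, eS A SA x z ↔ x ∈ S := by
      intro S
      induction S using Finset.induction_on with
      | empty => intro _; obtain ⟨z, hz⟩ := h3; exact ⟨z, fun x => by simp [hz x]⟩
      | @insert p S' hpS ih =>
        intro hS
        obtain ⟨z, hz⟩ := ih (fun x hx => hS x (Finset.mem_insert_of_mem hx))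
        obtain ⟨z', hz'⟩ := h4 z p (hS p (Finset.mem_insert_self p S'))
        refine ⟨z', fun x => by rw [hz' x, hz x, Finset.mem_insert]; tauto⟩
    obtain ⟨z, hz⟩ := rep ((Pts A SA).filter (fun p => Even (((Pts A SA).filter (fun x => r x p)).card)))
      (fun x hx => (hmem x).1 (Finset.mem_filter.1 hx).1)
    refine ⟨z, ?_, ?_, ?_⟩
    · intro p hpp hfst
      rw [hz p]
      refine Finset.mem_filter.2 ⟨(hmem p).2 hpp, ?_⟩
      rw [hfirst p ((hmem p).2 hpp) hfst]
      exact Even.zero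
    · intro p q hpp hqq hpq hbet
      have h1 := hrank_succ p q ((hmem p).2 hpp) ((hmem q).2 hqq) hpq hbet
      rw [hz p, hz q]
      simp only [Finset.mem_filter, (hmem p).2 hpp, (hmem q).2 hqq, true_and, h1, Nat.even_add_one]
      tauto
    · intro p hpp hlst
      rw [hz p]
      intro hmemS
      have hev := (Finset.mem_filter.1 hmemS).2
      have h3' := hlast p ((hmem p).2 hpp) hlst
      have heven' : Even ((Pts A SA).card) := heven
      rw [← h3', Nat.even_add_one] at heven'
      exact heven' hev

end

/-! ### Characterization of phi -/

lemma realize_phi (A : Type) [Fintype A] (SA : pordL.Structure A) (r : A → A → Prop)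
    (hr : IsStrictTotalOrder A r) :
    @Sentence.Realize L A (addOrderStruct pordL A SA r) phi ↔
      (T3sem A SA ∧ T4sem A SA ∧ Even (nP A SA)) := by
  have h : @Sentence.Realize L A (addOrderStruct pordL A SA r) phi ↔
      (@Sentence.Realize L A (addOrderStruct pordL A SA r) T3S ∧
       @Sentence.Realize L A (addOrderStruct pordL A SA r) T4S ∧
       @Sentence.Realize L A (addOrderStruct pordL A SA r) ParS) := by
    simp [phi, Sentence.Realize, Formula.Realize, and_assoc]
  rw [h, realize_T3S A SA r, realize_T4S A SA r, realize_ParS A SA r]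
  constructor
  · rintro ⟨a, b, c⟩; exact ⟨a, b, (parSem_iff_even A SA r hr a b).1 c⟩
  · rintro ⟨a, b, c⟩; exact ⟨a, b, (parSem_iff_even A SA r hr a b).2 c⟩

/-! ### The concrete models -/

abbrev MA (n : ℕ) : Type := Fin n ⊕ Finset (Fin n)

def ptsM {n : ℕ} : MA n → Finset (Fin n) := Sum.elim (fun p => {p}) id

def StrM (n : ℕ) : pordL.{u, v}.Structure (MA n) where
  funMap := fun {m} f => PEmpty.elim f
  RelMap := fun {m} R v =>
    match m, R, v with
    | 2, _, v => (v 0).isLeft = true ∧ ptsM (v 0) ⊆ ptsM (v 1)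
    | 0, R, _ => R.elim
    | 1, R, _ => R.elim
    | (_+3), R, _ => R.elim

lemma eS_M {n : ℕ} (x y : MA n) :
    eS (MA n) (StrM n) x y ↔ (x.isLeft = true ∧ ptsM x ⊆ ptsM y) := Iff.rfl

lemma eS_M_self {n : ℕ} (x : MA n) : eS (MA n) (StrM n) x x ↔ x.isLeft = true := by
  rw [eS_M]
  exact and_iff_left (subset_refl _)

lemma h3M (n : ℕ) : T3sem (MA n) (StrM n) := by
  refine ⟨Sum.inr ∅, ?_⟩
  rintro x hx
  rw [eS_M] at hx
  obtain ⟨hL, hsub⟩ := hx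
  cases x with
  | inl p => simpa [ptsM] using hsub
  | inr s => simp at hL

lemma h4M (n : ℕ) : T4sem (MA n) (StrM n) := by
  intro y p hpp
  rw [eS_M_self] at hpp
  cases p with
  | inr s => simp at hpp
  | inl p0 =>
    refine ⟨Sum.inr (ptsM y ∪ {p0}), ?_⟩
    intro x
    rw [eS_M, eS_M]
    cases x with
    | inr s => simp [ptsM]
    | inl a =>
      simp only [Sum.isLeft_inl, true_and, ptsM, Sum.elim_inl, Sum.elim_inr,
        Finset.singleton_subset_iff, Finset.mem_union, Finset.mem_singleton, Sum.inl.injEq,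
        id_eq]

lemma nP_M (n : ℕ) : nP (MA n) (StrM n) = n := by
  classical
  have h : Pts (MA n) (StrM n) = Finset.univ.image (Sum.inl : Fin n → MA n) := by
    ext x
    rw [mem_Pts, eS_M_self]
    cases x <;> simp
  rw [nP, h, Finset.card_image_of_injective _ Sum.inl_injective, Finset.card_univ,
    Fintype.card_fin]

/-! ### Cells and the back-and-forth invariant -/

def bpf {n l : ℕ} (xs : Fin l → MA n) (p : Fin n) : Fin l → Bool :=
  fun i => decide (p ∈ ptsM (xs i))

noncomputable def cell {n l : ℕ} (xs : Fin l → MA n) (b : Fin l → Bool) : Finset (Fin n) := by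
  classical exact Finset.univ.filter (fun p => bpf xs p = b)

lemma mem_cell {n l : ℕ} {xs : Fin l → MA n} {b : Fin l → Bool} {p : Fin n} :
    p ∈ cell xs b ↔ bpf xs p = b := by
  simp [cell]

def Corr {n m l : ℕ} (k : ℕ) (xs : Fin l → MA n) (ys : Fin l → MA m) : Prop :=
  (∀ i, (xs i).isLeft = (ys i).isLeft) ∧
  ∀ b : Fin l → Bool, min (cell xs b).card (2^k) = min (cell ys b).card (2^k)

lemma corr_symm {n m l k : ℕ} {xs : Fin l → MA n} {ys : Fin l → MA m}
    (h : Corr k xs ys) : Corr k ys xs :=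
  ⟨fun i => (h.1 i).symm, fun b => (h.2 b).symm⟩

lemma corr_mono {n m l j k : ℕ} {xs : Fin l → MA n} {ys : Fin l → MA m}
    (hjk : j ≤ k) (h : Corr k xs ys) : Corr j xs ys := by
  refine ⟨h.1, fun b => ?_⟩
  have hp : (2:ℕ)^j ≤ 2^k := Nat.pow_le_pow_right (by norm_num) hjk
  have := h.2 b
  omega

lemma cell_empty_transfer {n m l k : ℕ} {xs : Fin l → MA n} {ys : Fin l → MA m}
    (h : Corr k xs ys) (b : Fin l → Bool) : cell xs b = ∅ ↔ cell ys b = ∅ := by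
  have h2 := h.2 b
  have hK : (1:ℕ) ≤ 2^k := Nat.one_le_two_pow
  rw [← Finset.card_eq_zero, ← Finset.card_eq_zero]
  omega

lemma subset_iff_cells {n l : ℕ} (xs : Fin l → MA n) (i j : Fin l) :
    ptsM (xs i) ⊆ ptsM (xs j) ↔
      ∀ b : Fin l → Bool, b i = true → b j = false → cell xs b = ∅ := by
  constructor
  · intro hsub b hbi hbj
    rw [Finset.eq_empty_iff_forall_notMem]
    intro p hp
    rw [mem_cell] at hp
    subst hp
    have h1 : p ∈ ptsM (xs i) := by simpa [bpf] using hbi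
    have h2 := hsub h1
    simp [bpf, h2] at hbj
  · intro h p hp
    by_contra hpj
    have h1 : (bpf xs p) i = true := by simp [bpf, hp]
    have h2 : (bpf xs p) j = false := by simp [bpf, hpj]
    have := h _ h1 h2
    rw [Finset.eq_empty_iff_forall_notMem] at this
    exact this p (mem_cell.2 rfl)

lemma subset_transfer {n m l k : ℕ} {xs : Fin l → MA n} {ys : Fin l → MA m}
    (h : Corr k xs ys) (i j : Fin l) :
    ptsM (xs i) ⊆ ptsM (xs j) ↔ ptsM (ys i) ⊆ ptsM (ys j) := by
  rw [subset_iff_cells, subset_iff_cells]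
  constructor
  · intro hh b h1 h2
    rw [← cell_empty_transfer h]
    exact hh b h1 h2
  · intro hh b h1 h2
    rw [cell_empty_transfer h]
    exact hh b h1 h2

lemma elt_ext {n : ℕ} (x y : MA n) : x = y ↔ (x.isLeft = y.isLeft ∧ ptsM x = ptsM y) := by
  cases x <;> cases y <;> simp [ptsM]

lemma eq_transfer {n m l k : ℕ} {xs : Fin l → MA n} {ys : Fin l → MA m}
    (h : Corr k xs ys) (i j : Fin l) : xs i = xs j ↔ ys i = ys j := by
  rw [elt_ext, elt_ext, h.1 i, h.1 j]
  have h1 := subset_transfer h i j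
  have h2 := subset_transfer h j i
  constructor
  · rintro ⟨hL, hp⟩
    exact ⟨hL, Finset.Subset.antisymm (h1.1 (le_of_eq hp)) (h2.1 (le_of_eq hp.symm))⟩
  · rintro ⟨hL, hp⟩
    exact ⟨hL, Finset.Subset.antisymm (h1.2 (le_of_eq hp)) (h2.2 (le_of_eq hp.symm))⟩

lemma erel_transfer {n m l k : ℕ} {xs : Fin l → MA n} {ys : Fin l → MA m}
    (h : Corr k xs ys) (i j : Fin l) :
    eS (MA n) (StrM n) (xs i) (xs j) ↔ eS (MA m) (StrM m) (ys i) (ys j) := by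
  rw [eS_M, eS_M, h.1 i, subset_transfer h i j]

/-! ### Extension lemma -/

lemma snoc_eq_iff {α : Type*} {l : ℕ} (f : Fin l → α) (a : α) (c : Fin (l+1) → α) :
    Fin.snoc f a = c ↔ (f = (fun i => c i.castSucc) ∧ a = c (Fin.last l)) := by
  constructor
  · rintro rfl
    exact ⟨by funext i; simp, by simp⟩
  · rintro ⟨rfl, rfl⟩
    funext i
    refine Fin.lastCases ?_ ?_ i
    · simp
    · intro j; simp

lemma cell_snoc {n l : ℕ} (xs : Fin l → MA n) (z : MA n) (c : Fin (l+1) → Bool) :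
    cell (Fin.snoc xs z) c =
      (if c (Fin.last l) = true then (cell xs (fun i => c i.castSucc)) ∩ ptsM z
       else (cell xs (fun i => c i.castSucc)) \ ptsM z) := by
  ext p
  have hbp : bpf (Fin.snoc xs z) p = Fin.snoc (bpf xs p) (decide (p ∈ ptsM z)) := by
    funext i
    refine Fin.lastCases ?_ ?_ i
    · simp [bpf]
    · intro j; simp [bpf]
  rw [mem_cell, hbp, snoc_eq_iff]
  by_cases hcl : c (Fin.last l) = true
  · rw [if_pos hcl, Finset.mem_inter, mem_cell, hcl]
    constructor
    · rintro ⟨h1, h2⟩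
      exact ⟨h1, by simpa using h2.symm⟩
    · rintro ⟨h1, h2⟩
      exact ⟨h1, by simpa using h2⟩
  · rw [if_neg hcl, Finset.mem_sdiff, mem_cell]
    rw [Bool.not_eq_true] at hcl
    rw [hcl]
    constructor
    · rintro ⟨h1, h2⟩
      exact ⟨h1, by simpa using h2.symm⟩
    · rintro ⟨h1, h2⟩
      exact ⟨h1, by simpa using h2⟩

lemma minsplit (K a1 a2 a' : ℕ) (hK : 1 ≤ K) (h : min (a1+a2) (2*K) = min a' (2*K)) :
    ∃ b1 b2 : ℕ, b1 + b2 = a' ∧ min a1 K = min b1 K ∧ min a2 K = min b2 K := by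
  by_cases he : a1 + a2 = a'
  · exact ⟨a1, a2, he, rfl, rfl⟩
  · have h1 : 2*K ≤ a1 + a2 := by omega
    have h2 : 2*K ≤ a' := by omega
    by_cases hc1 : a1 < K
    · exact ⟨a1, a' - a1, by omega, rfl, by omega⟩
    · by_cases hc2 : a2 < K
      · exact ⟨a' - a2, a2, by omega, by omega, rfl⟩
      · exact ⟨K, a' - K, by omega, by omega, by omega⟩

lemma corr_ext {n m l k : ℕ} (xs : Fin l → MA n) (ys : Fin l → MA m)
    (hc : Corr (k+1) xs ys) (z : MA n) :
    ∃ z' : MA m, Corr k (Fin.snoc xs z) (Fin.snoc ys z') := by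
  classical
  obtain ⟨hL, hmin⟩ := hc
  have hK : (1:ℕ) ≤ 2^k := Nat.one_le_two_pow
  have hpow : (2:ℕ)^(k+1) = 2*2^k := by ring
  cases z with
  | inl p =>
    have hp0 : p ∈ cell xs (bpf xs p) := mem_cell.2 rfl
    have hne : (cell ys (bpf xs p)).Nonempty := by
      rw [← Finset.card_pos]
      have h1 : 0 < (cell xs (bpf xs p)).card := Finset.card_pos.2 ⟨p, hp0⟩
      have h2 := hmin (bpf xs p)
      have h3 : (1:ℕ) ≤ 2^(k+1) := Nat.one_le_two_pow
      omega
    obtain ⟨p', hp'⟩ := hne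
    have hbpp' : bpf ys p' = bpf xs p := mem_cell.1 hp'
    refine ⟨Sum.inl p', ⟨?_, ?_⟩⟩
    · intro i
      refine Fin.lastCases ?_ ?_ i
      · simp
      · intro j; simp [hL j]
    · intro c
      rw [cell_snoc, cell_snoc]
      set b : Fin l → Bool := fun i => c i.castSucc with hb
      have hptsx : ptsM (Sum.inl p) = {p} := rfl
      have hptsy : ptsM (Sum.inl p') = {p'} := rfl
      by_cases hcl : c (Fin.last l) = true
      · rw [if_pos hcl, if_pos hcl]
        by_cases hbb : b = bpf xs p
        · have hx : cell xs b ∩ ptsM (Sum.inl p) = {p} := by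
            rw [hptsx]
            ext q
            simp only [Finset.mem_inter, mem_cell, Finset.mem_singleton]
            constructor
            · rintro ⟨_, rfl⟩; rfl
            · rintro rfl; exact ⟨hbb.symm, rfl⟩
          have hy : cell ys b ∩ ptsM (Sum.inl p') = {p'} := by
            rw [hptsy]
            ext q
            simp only [Finset.mem_inter, mem_cell, Finset.mem_singleton]
            constructor
            · rintro ⟨_, rfl⟩; rfl
            · rintro rfl; exact ⟨hbpp'.trans hbb.symm, rfl⟩
          rw [hx, hy]
          simp
        · have hx : cell xs b ∩ ptsM (Sum.inl p) = ∅ := by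
            rw [hptsx]
            ext q
            simp only [Finset.mem_inter, mem_cell, Finset.mem_singleton,
              Finset.notMem_empty, iff_false, not_and]
            rintro h1 rfl
            exact hbb h1.symm
          have hy : cell ys b ∩ ptsM (Sum.inl p') = ∅ := by
            rw [hptsy]
            ext q
            simp only [Finset.mem_inter, mem_cell, Finset.mem_singleton,
              Finset.notMem_empty, iff_false, not_and]
            rintro h1 rfl
            exact hbb (h1.symm.trans hbpp')
          rw [hx, hy]
          simp
      · rw [if_neg hcl, if_neg hcl]
        rw [hptsx, hptsy, Finset.sdiff_singleton_eq_erase, Finset.sdiff_singleton_eq_erase]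
        have hmb := hmin b
        rw [hpow] at hmb
        by_cases hbb : b = bpf xs p
        · have hpx : p ∈ cell xs b := mem_cell.2 hbb.symm
          have hpy : p' ∈ cell ys b := mem_cell.2 (hbpp'.trans hbb.symm)
          rw [Finset.card_erase_of_mem hpx, Finset.card_erase_of_mem hpy]
          have c1 : 0 < (cell xs b).card := Finset.card_pos.2 ⟨p, hpx⟩
          have c2 : 0 < (cell ys b).card := Finset.card_pos.2 ⟨p', hpy⟩
          omega
        · rw [Finset.erase_eq_of_notMem (fun h => hbb (mem_cell.1 h).symm),
            Finset.erase_eq_of_notMem (fun h => hbb ((mem_cell.1 h).symm.trans hbpp'))]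
          omega
  | inr s =>
    have choice : ∀ b : Fin l → Bool, ∃ t : Finset (Fin m), t ⊆ cell ys b ∧
        min ((cell xs b ∩ s).card) (2^k) = min t.card (2^k) ∧
        min ((cell xs b \ s).card) (2^k) = min ((cell ys b \ t).card) (2^k) := by
      intro b
      have hsum : (cell xs b ∩ s).card + (cell xs b \ s).card = (cell xs b).card := by
        rw [add_comm]
        exact Finset.card_sdiff_add_card_inter _ _
      have hmb := hmin b
      rw [hpow] at hmb
      obtain ⟨b1, b2, hb12, h1, h2⟩ := minsplit (2^k) _ _ ((cell ys b).card) hK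
        (by rw [hsum]; exact hmb)
      obtain ⟨t, hts, htc⟩ := Finset.exists_subset_card_eq
        (show b1 ≤ (cell ys b).card by omega)
      refine ⟨t, hts, by rw [htc]; exact h1, ?_⟩
      rw [Finset.card_sdiff_of_subset hts, htc, show (cell ys b).card - b1 = b2 by omega]
      exact h2
    choose t ht1 ht2 ht3 using choice
    refine ⟨Sum.inr (Finset.univ.biUnion t), ⟨?_, ?_⟩⟩
    · intro i
      refine Fin.lastCases ?_ ?_ i
      · simp
      · intro j; simp [hL j]
    · intro c
      rw [cell_snoc, cell_snoc]
      set b : Fin l → Bool := fun i => c i.castSucc with hb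
      have hptsx : ptsM (Sum.inr s) = s := rfl
      have hptsy : ptsM (Sum.inr (Finset.univ.biUnion t)) = Finset.univ.biUnion t := rfl
      have hkey : cell ys b ∩ (Finset.univ.biUnion t) = t b := by
        ext q
        simp only [Finset.mem_inter, Finset.mem_biUnion, Finset.mem_univ, true_and]
        constructor
        · rintro ⟨hq, b', hqt⟩
          have h1 : q ∈ cell ys b' := ht1 b' hqt
          have hbb : b' = b := (mem_cell.1 h1).symm.trans (mem_cell.1 hq)
          rwa [hbb] at hqt
        · intro hq
          exact ⟨ht1 b hq, b, hq⟩
      have hkey2 : cell ys b \ (Finset.univ.biUnion t) = cell ys b \ t b := by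
        ext q
        simp only [Finset.mem_sdiff, Finset.mem_biUnion, Finset.mem_univ, true_and, not_exists]
        constructor
        · rintro ⟨hq, h2⟩
          exact ⟨hq, h2 b⟩
        · rintro ⟨hq, h2⟩
          refine ⟨hq, fun b' hqt => ?_⟩
          have h1 : q ∈ cell ys b' := ht1 b' hqt
          have hbb : b' = b := (mem_cell.1 h1).symm.trans (mem_cell.1 hq)
          exact h2 (hbb ▸ hqt)
      by_cases hcl : c (Fin.last l) = true
      · rw [if_pos hcl, if_pos hcl, hptsx, hptsy, hkey]
        exact ht2 b
      · rw [if_neg hcl, if_neg hcl, hptsx, hptsy, hkey2]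
        exact ht3 b

/-! ### Quantifier depth and Ehrenfeucht–Fraïssé argument -/

def qd : ∀ {l : ℕ}, pordL.BoundedFormula Empty l → ℕ
  | _, BoundedFormula.falsum => 0
  | _, BoundedFormula.equal _ _ => 0
  | _, BoundedFormula.rel _ _ => 0
  | _, BoundedFormula.imp f g => max (qd f) (qd g)
  | _, BoundedFormula.all f => qd f + 1

lemma term_var {l : ℕ} (t : pordL.Term (Empty ⊕ Fin l)) :
    ∃ i : Fin l, t = Term.var (Sum.inr i) := by
  cases t with
  | var v =>
    cases v with
    | inl e => exact e.elim
    | inr i => exact ⟨i, rfl⟩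
  | func f ts => exact PEmpty.elim f

theorem ef_main : ∀ {l : ℕ} (φ : pordL.{u, v}.BoundedFormula Empty l) (k : ℕ), qd φ ≤ k →
    ∀ {n m : ℕ} (xs : Fin l → MA n) (ys : Fin l → MA m), Corr k xs ys →
    ∀ (v1 : Empty → MA n) (v2 : Empty → MA m),
    (@BoundedFormula.Realize pordL.{u, v} (MA n) (StrM.{u, v} n) Empty l φ v1 xs ↔
     @BoundedFormula.Realize pordL.{u, v} (MA m) (StrM.{u, v} m) Empty l φ v2 ys) := by
  intro l φ
  induction φ with
  | falsum =>
    intro k hk n m xs ys hc v1 v2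
    simp [BoundedFormula.Realize]
  | equal t1 t2 =>
    intro k hk n m xs ys hc v1 v2
    obtain ⟨i, rfl⟩ := term_var t1
    obtain ⟨j, rfl⟩ := term_var t2
    have h1 : @BoundedFormula.Realize pordL (MA n) (StrM n) Empty _
        (BoundedFormula.equal (Term.var (Sum.inr i)) (Term.var (Sum.inr j))) v1 xs ↔
        xs i = xs j := Iff.rfl
    have h2 : @BoundedFormula.Realize pordL (MA m) (StrM m) Empty _
        (BoundedFormula.equal (Term.var (Sum.inr i)) (Term.var (Sum.inr j))) v2 ys ↔
        ys i = ys j := Iff.rfl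
    rw [h1, h2]
    exact eq_transfer hc i j
  | @rel l' ar R ts =>
    intro k hk n m xs ys hc v1 v2
    match ar, R with
    | 2, PUnit.unit =>
      obtain ⟨i, hi⟩ := term_var (ts 0)
      obtain ⟨j, hj⟩ := term_var (ts 1)
      have h1 : @BoundedFormula.Realize pordL.{u, v} (MA n) (StrM.{u, v} n) Empty _
          (BoundedFormula.rel (show pordL.{u, v}.Relations 2 from PUnit.unit) ts) v1 xs ↔
          eS (MA n) (StrM.{u, v} n) (@Term.realize pordL.{u, v} (MA n) (StrM.{u, v} n) _ (Sum.elim v1 xs) (ts 0))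
            (@Term.realize pordL.{u, v} (MA n) (StrM.{u, v} n) _ (Sum.elim v1 xs) (ts 1)) := Iff.rfl
      have h2 : @BoundedFormula.Realize pordL.{u, v} (MA m) (StrM.{u, v} m) Empty _
          (BoundedFormula.rel (show pordL.{u, v}.Relations 2 from PUnit.unit) ts) v2 ys ↔
          eS (MA m) (StrM.{u, v} m) (@Term.realize pordL.{u, v} (MA m) (StrM.{u, v} m) _ (Sum.elim v2 ys) (ts 0))
            (@Term.realize pordL.{u, v} (MA m) (StrM.{u, v} m) _ (Sum.elim v2 ys) (ts 1)) := Iff.rfl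
      rw [h1, h2, hi, hj]
      have e1 : @Term.realize pordL.{u, v} (MA n) (StrM.{u, v} n) _ (Sum.elim v1 xs) (Term.var (Sum.inr i)) = xs i := rfl
      have e2 : @Term.realize pordL.{u, v} (MA n) (StrM.{u, v} n) _ (Sum.elim v1 xs) (Term.var (Sum.inr j)) = xs j := rfl
      have e3 : @Term.realize pordL.{u, v} (MA m) (StrM.{u, v} m) _ (Sum.elim v2 ys) (Term.var (Sum.inr i)) = ys i := rfl
      have e4 : @Term.realize pordL.{u, v} (MA m) (StrM.{u, v} m) _ (Sum.elim v2 ys) (Term.var (Sum.inr j)) = ys j := rfl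
      rw [e1, e2, e3, e4]
      exact erel_transfer hc i j
  | imp f g ihf ihg =>
    intro k hk n m xs ys hc v1 v2
    have hkf : qd f ≤ k := le_trans (le_max_left _ _) hk
    have hkg : qd g ≤ k := le_trans (le_max_right _ _) hk
    simp only [BoundedFormula.realize_imp]
    exact imp_congr (ihf k hkf xs ys hc v1 v2) (ihg k hkg xs ys hc v1 v2)
  | all f ihf =>
    intro k hk n m xs ys hc v1 v2
    have hk1 : qd f + 1 ≤ k := hk
    have hc' : Corr (qd f + 1) xs ys := corr_mono hk1 hc
    simp only [BoundedFormula.realize_all]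
    constructor
    · intro h z'
      obtain ⟨z, hz⟩ := corr_ext ys xs (corr_symm hc') z'
      exact (ihf (qd f) le_rfl _ _ (corr_symm hz) v1 v2).1 (h z)
    · intro h z
      obtain ⟨z', hz⟩ := corr_ext xs ys hc' z
      exact (ihf (qd f) le_rfl _ _ hz v1 v2).2 (h z')

lemma corr_zero (k n m : ℕ) (hn : 2^k ≤ n) (hm : 2^k ≤ m)
    (xs : Fin 0 → MA n) (ys : Fin 0 → MA m) : Corr k xs ys := by
  classical
  refine ⟨fun i => i.elim0, fun b => ?_⟩
  have hx : cell xs b = Finset.univ := by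
    ext p
    simp only [mem_cell, Finset.mem_univ, iff_true]
    funext i
    exact i.elim0
  have hy : cell ys b = Finset.univ := by
    ext p
    simp only [mem_cell, Finset.mem_univ, iff_true]
    funext i
    exact i.elim0
  rw [hx, hy, Finset.card_univ, Finset.card_univ, Fintype.card_fin, Fintype.card_fin]
  omega

/-! ### Main theorem -/

/-- Order-invariant first-order logic is strictly more expressive than first-order logic
on finite structures: there are a finite relational signature `σ` and a sentence `φ` over
`σ ∪ {<}` that is order-invariant on finite `σ`-structures, such that no first-order
`σ`-sentence defines the same class of finite `σ`-structures. -/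
theorem stmt14 :
    ∃ (σ : FirstOrder.Language) (_ : σ.IsRelational) (_ : Finite (Σ n, σ.Relations n))
      (φ : (addOrder σ).Sentence),
      -- φ is order-invariant on finite σ-structures:
      (∀ (A : Type) (_ : Fintype A) (SA : σ.Structure A) (r₁ r₂ : A → A → Prop),
        IsStrictTotalOrder A r₁ → IsStrictTotalOrder A r₂ →
        (@Sentence.Realize (addOrder σ) A (addOrderStruct σ A SA r₁) φ ↔
          @Sentence.Realize (addOrder σ) A (addOrderStruct σ A SA r₂) φ)) ∧
      -- but no first-order σ-sentence defines the same class of finite σ-structures: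
      ¬ ∃ ψ : σ.Sentence,
          ∀ (A : Type) (_ : Fintype A) (SA : σ.Structure A) (r : A → A → Prop),
            IsStrictTotalOrder A r →
            (@Sentence.Realize (addOrder σ) A (addOrderStruct σ A SA r) φ ↔
              @Sentence.Realize σ A SA ψ) := by
  refine ⟨pordL, inferInstance, inferInstance, phi, ?_, ?_⟩
  · intro A fA SA r1 r2 h1 h2
    haveI := fA
    rw [realize_phi A SA r1 h1, realize_phi A SA r2 h2]
  · rintro ⟨ψ, hψ⟩
    classical
    set k := qd ψ with hkdef
    have horder : ∀ N : ℕ, ∃ rr : MA N → MA N → Prop, IsStrictTotalOrder (MA N) rr := by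
      intro N
      set e := Fintype.equivFin (MA N) with he
      refine ⟨fun a b => e a < e b, ?_⟩
      haveI h1 : IsTrichotomous (MA N) (fun a b => e a < e b) := by
        constructor
        intro a b
        rcases lt_trichotomy (e a) (e b) with h | h | h
        · exact fun h1 _ => absurd h h1
        · exact fun _ _ => e.injective h
        · exact fun _ h2 => absurd h h2
      haveI h2 : IsIrrefl (MA N) (fun a b => e a < e b) := ⟨fun a => lt_irrefl _⟩
      haveI h3 : IsTrans (MA N) (fun a b => e a < e b) := ⟨fun a b c => lt_trans⟩
      haveI h4 : IsStrictOrder (MA N) (fun a b => e a < e b) := ⟨⟩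
      exact ⟨⟩
    obtain ⟨r1, hr1⟩ := horder (2*2^k)
    obtain ⟨r2, hr2⟩ := horder (2*2^k+1)
    have e1 := hψ (MA (2*2^k)) inferInstance (StrM _) r1 hr1
    have e2 := hψ (MA (2*2^k+1)) inferInstance (StrM _) r2 hr2
    rw [realize_phi _ _ _ hr1] at e1
    rw [realize_phi _ _ _ hr2] at e2
    have hψ1 : @Sentence.Realize pordL (MA (2*2^k)) (StrM _) ψ :=
      e1.1 ⟨h3M _, h4M _, by rw [nP_M]; exact ⟨2^k, by ring⟩⟩
    have hψ2 : ¬ @Sentence.Realize pordL (MA (2*2^k+1)) (StrM _) ψ := by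
      intro h
      obtain ⟨_, _, hev⟩ := e2.2 h
      rw [nP_M] at hev
      obtain ⟨c, hc⟩ := hev
      omega
    have hp : (1:ℕ) ≤ 2^k := Nat.one_le_two_pow
    have hiff : @Sentence.Realize pordL (MA (2*2^k)) (StrM _) ψ ↔
        @Sentence.Realize pordL (MA (2*2^k+1)) (StrM _) ψ := by
      unfold Sentence.Realize Formula.Realize
      exact ef_main ψ k le_rfl _ _ (corr_zero k _ _ (by omega) (by omega) _ _) _ _
    exact hψ2 (hiff.1 hψ1)
end
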